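/- Let d, n be positive integers with gcd(d,n) = 1, let r be an integer, and let a, b, c, e be indeterminates. Let m₁ be the integer with 0 ≤ m₁ ≤ n−1 and d·m₁ ≡ −r (mod n). Then, modulo [n], one has Σ_{k=0}^{m₁} [2dk+r] · (q^r, cq^r, eq^r, q^r/b, aq^r, q^r/a; q^d)_k / (q^d, q^d/c, q^d/e, q^d b, q^d/a, aq^d; q^d)_k · (b/(ce))^k · q^{(2d−3r)k} ≡ 0. -/

import Mathlib

/-- The q-shifted factorial `(a; q)_k = (1-a)(1-aq)⋯(1-aq^{k-1})`. -/
noncomputable def qPoch {K : Type*} [Field K] (a q : K) (k : ℕ) : K :=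
  ∏ i ∈ Finset.range k, (1 - a * q ^ i)

/-- The q-integer `[m]_q = (1 - q^m)/(1 - q)` for an integer `m`. -/
noncomputable def qIntZ {K : Type*} [Field K] (m : ℤ) (q : K) : K :=
  (1 - q ^ m) / (1 - q)

/-- `A ≡ B (mod P)`: written as a reduced fraction of polynomials, the numerator of
`A - B` is divisible by `P`. -/
def fracCongr {R K : Type*} [CommRing R] [Field K] [Algebra R K] (A B : K) (P : R) : Prop :=
  ∃ f g : R, IsRelPrime g P ∧ P ∣ f ∧
    A - B = algebraMap R K f / algebraMap R K g

/-- The field of rational functions in the five indeterminates `q, a, b, c, e`. -/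
noncomputable abbrev K5 : Type := FractionRing (MvPolynomial (Fin 5) ℚ)

noncomputable def q : K5 := algebraMap (MvPolynomial (Fin 5) ℚ) K5 (MvPolynomial.X 0)
noncomputable def a : K5 := algebraMap (MvPolynomial (Fin 5) ℚ) K5 (MvPolynomial.X 1)
noncomputable def b : K5 := algebraMap (MvPolynomial (Fin 5) ℚ) K5 (MvPolynomial.X 2)
noncomputable def c : K5 := algebraMap (MvPolynomial (Fin 5) ℚ) K5 (MvPolynomial.X 3)
noncomputable def e : K5 := algebraMap (MvPolynomial (Fin 5) ℚ) K5 (MvPolynomial.X 4)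

/-- The summand of Lemma 1/2: `[2dk+r]·(q^r,cq^r,eq^r,q^r/b,aq^r,q^r/a;q^d)_k /
(q^d,q^d/c,q^d/e,q^d b,q^d/a,aq^d;q^d)_k · (b/(ce))^k · q^{(2d−3r)k}`. -/
noncomputable def lemmaTerm (dd : ℕ) (r : ℤ) (k : ℕ) : K5 :=
  qIntZ (2 * dd * k + r) q *
    (qPoch (q ^ r) (q ^ dd) k * qPoch (c * q ^ r) (q ^ dd) k * qPoch (e * q ^ r) (q ^ dd) k *
      qPoch (q ^ r / b) (q ^ dd) k * qPoch (a * q ^ r) (q ^ dd) k *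
      qPoch (q ^ r / a) (q ^ dd) k) /
    (qPoch (q ^ dd) (q ^ dd) k * qPoch (q ^ dd / c) (q ^ dd) k * qPoch (q ^ dd / e) (q ^ dd) k *
      qPoch (q ^ dd * b) (q ^ dd) k * qPoch (q ^ dd / a) (q ^ dd) k *
      qPoch (a * q ^ dd) (q ^ dd) k) *
    (b / (c * e)) ^ k * q ^ ((2 * dd - 3 * r) * k)

/- ===================== Auxiliary development ===================== -/

set_option linter.unusedSectionVars false
namespace S5
open MvPolynomial Finset

abbrev RR : Type := MvPolynomial (Fin 5) ℚ

noncomputable def am : RR →+* K5 := algebraMap RR K5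

lemma am_inj : Function.Injective am := IsFractionRing.injective RR K5

lemma am_ne {g : RR} (h : g ≠ 0) : am g ≠ 0 := by
  intro h0; exact h (am_inj (by simpa using h0))

noncomputable def PtoR : Polynomial ℚ →ₐ[ℚ] RR := Polynomial.aeval (X 0)

noncomputable def ψm (v : Fin 5 → RR) : RR →ₐ[ℚ] RR := MvPolynomial.aeval v

lemma ψm_PtoR (v : Fin 5 → RR) (hv : v 0 = X 0) (p : Polynomial ℚ) :
    ψm v (PtoR p) = PtoR p := by
  show ψm v (Polynomial.aeval (X 0 : RR) p) = Polynomial.aeval (X 0 : RR) p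
  rw [← Polynomial.aeval_algHom_apply]
  simp [ψm, hv]

noncomputable def ρQ : RR →ₐ[ℚ] Polynomial ℚ :=
  MvPolynomial.aeval (fun i => if i = 0 then Polynomial.X else 1)

lemma ρQ_PtoR (p : Polynomial ℚ) : ρQ (PtoR p) = p := by
  show ρQ (Polynomial.aeval (X 0 : RR) p) = p
  rw [← Polynomial.aeval_algHom_apply]
  simp [ρQ]

lemma dvd_of_PtoR_dvd {p f : Polynomial ℚ} (h : PtoR p ∣ PtoR f) : p ∣ f := by
  obtain ⟨u, hu⟩ := h
  exact ⟨ρQ u, by simpa [map_mul, ρQ_PtoR] using congrArg ρQ hu⟩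

/- ------------------- cyclotomic facts ------------------- -/

noncomputable def Phi (N : ℕ) : RR := PtoR (Polynomial.cyclotomic N ℚ)

section Cyclo
variable {N : ℕ}

lemma phi0_prime (hN : 0 < N) : Prime (Polynomial.cyclotomic N ℚ) :=
  UniqueFactorizationMonoid.irreducible_iff_prime.mp (Polynomial.cyclotomic.irreducible_rat hN)

noncomputable def ζC (N : ℕ) : ℂ := Complex.exp (2 * Real.pi * Complex.I / N)

lemma ζC_prim (hN : 0 < N) : IsPrimitiveRoot (ζC N) N :=
  Complex.isPrimitiveRoot_exp N hN.ne'

lemma aeval_eq_zero_of_cyclo_dvd (hN : 0 < N) {p : Polynomial ℚ}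
    (h : Polynomial.cyclotomic N ℚ ∣ p) : Polynomial.aeval (ζC N) p = 0 := by
  obtain ⟨u, rfl⟩ := h
  have hroot : Polynomial.aeval (ζC N) (Polynomial.cyclotomic N ℚ) = 0 := by
    rw [Polynomial.aeval_def, Polynomial.eval₂_eq_eval_map, Polynomial.map_cyclotomic]
    exact ((ζC_prim hN).isRoot_cyclotomic hN)
  rw [map_mul, hroot, zero_mul]

lemma not_cyclo_dvd (hN : 0 < N) {p : Polynomial ℚ}
    (h : Polynomial.aeval (ζC N) p ≠ 0) : ¬ Polynomial.cyclotomic N ℚ ∣ p :=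
  fun hd => h (aeval_eq_zero_of_cyclo_dvd hN hd)

lemma cyclo_not_dvd_X_pow (hN : 0 < N) (j : ℕ) :
    ¬ Polynomial.cyclotomic N ℚ ∣ Polynomial.X ^ j := by
  refine not_cyclo_dvd hN ?_
  have : (ζC N) ≠ 0 := (ζC_prim hN).ne_zero hN.ne'
  simp [this]

lemma cyclo_dvd_X_pow_sub_one {m : ℕ} (hm : 0 < m) (h : N ∣ m) :
    Polynomial.cyclotomic N ℚ ∣ Polynomial.X ^ m - 1 := by
  rw [← Polynomial.prod_cyclotomic_eq_X_pow_sub_one hm ℚ]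
  exact Finset.dvd_prod_of_mem _ (Nat.mem_divisors.mpr ⟨h, hm.ne'⟩)

lemma cyclo_not_dvd_X_pow_sub_one (hN : 0 < N) {m : ℕ} (h : ¬ N ∣ m) :
    ¬ Polynomial.cyclotomic N ℚ ∣ Polynomial.X ^ m - 1 := by
  refine not_cyclo_dvd hN ?_
  have : (ζC N) ^ m ≠ 1 := fun hh => h (((ζC_prim hN).pow_eq_one_iff_dvd m).mp hh)
  simpa [sub_eq_zero] using this

lemma squarefree_X_pow_sub_one {m : ℕ} (hm : 0 < m) :
    Squarefree (Polynomial.X ^ m - 1 : Polynomial ℚ) := by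
  have := (Polynomial.separable_X_pow_sub_C (1 : ℚ)
    (by exact_mod_cast (Nat.cast_ne_zero (R := ℚ)).mpr hm.ne') one_ne_zero).squarefree
  simpa using this

/- Prime (Phi N) -/

noncomputable def EE : RR ≃ₐ[ℚ] MvPolynomial (Fin 4) (Polynomial ℚ) :=
  (renameEquiv ℚ (_root_.finSuccEquiv 4)).trans (optionEquivRight ℚ (Fin 4))

lemma EE_X0 : EE (X 0) = MvPolynomial.C Polynomial.X := by
  simp [EE, optionEquivRight_X_none]

lemma EE_Phi : EE (Phi N) = MvPolynomial.C (Polynomial.cyclotomic N ℚ) := by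
  show EE (Polynomial.aeval (X 0 : RR) _) = _
  rw [← Polynomial.aeval_algHom_apply, EE_X0, ← MvPolynomial.algebraMap_eq,
    Polynomial.aeval_algebraMap_apply]
  simp

lemma prime_Phi (hN : 0 < N) : Prime (Phi N) := by
  have h2 : Prime (EE (Phi N)) := by
    rw [EE_Phi]; exact (MvPolynomial.prime_C_iff _).mpr (phi0_prime hN)
  refine ⟨fun h0 => h2.1 (by rw [h0, map_zero]), fun hu => h2.2.1 (hu.map EE), ?_⟩
  intro x y hxy
  have hdvd : EE (Phi N) ∣ EE x * EE y := by rw [← map_mul]; exact map_dvd _ hxy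
  rcases h2.2.2 _ _ hdvd with h | h <;> [left; right] <;>
  · obtain ⟨u, hu⟩ := h
    exact ⟨EE.symm u, EE.injective (by rw [map_mul, AlgEquiv.apply_symm_apply]; exact hu)⟩

lemma Phi_dvd_PtoR {p : Polynomial ℚ} (h : Polynomial.cyclotomic N ℚ ∣ p) :
    Phi N ∣ PtoR p := map_dvd _ h

lemma Phi_not_dvd_PtoR {p : Polynomial ℚ} (h : ¬ Polynomial.cyclotomic N ℚ ∣ p) :
    ¬ Phi N ∣ PtoR p := fun hd => h (dvd_of_PtoR_dvd hd)

lemma Phi_not_dvd_hom (hN : 0 < N) {f : RR} (v : Fin 5 → RR) (hv : v 0 = X 0)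
    (hu : IsUnit (ψm v f)) : ¬ Phi N ∣ f := by
  intro hd
  obtain ⟨u, hu'⟩ := hd
  have hφ : ψm v (Phi N) = Phi N := ψm_PtoR v hv _
  have : Phi N ∣ ψm v f := ⟨ψm v u, by rw [hu', map_mul, hφ]⟩
  exact (prime_Phi hN).not_unit (isUnit_of_dvd_unit this hu)

end Cyclo

/- ------------------- local integrality/vanishing calculus ------------------- -/

def IAt (P : RR) (x : K5) : Prop := ∃ f g : RR, ¬ P ∣ g ∧ x = am f / am g
def UAt (P : RR) (x : K5) : Prop := ∃ f g : RR, (¬ P ∣ f) ∧ (¬ P ∣ g) ∧ x = am f / am g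
def ZAt (P : RR) (x : K5) : Prop := ∃ f g : RR, P ∣ f ∧ (¬ P ∣ g) ∧ x = am f / am g

section Calc
variable {P : RR} (hP : Prime P)
include hP

lemma UAt.iAt {x : K5} (h : UAt P x) : IAt P x := by
  obtain ⟨f, g, _, hg, hx⟩ := h; exact ⟨f, g, hg, hx⟩

lemma ZAt.iAt {x : K5} (h : ZAt P x) : IAt P x := by
  obtain ⟨f, g, _, hg, hx⟩ := h; exact ⟨f, g, hg, hx⟩

lemma iAt_am (f : RR) {g : RR} (hg : ¬ P ∣ g) : IAt P (am f / am g) := ⟨f, g, hg, rfl⟩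

lemma iAt_poly (f : RR) : IAt P (am f) := by
  refine ⟨f, 1, fun hd => ?_, by simp⟩
  · exact hP.not_unit (isUnit_of_dvd_one hd)

lemma zAt_zero : ZAt P (0 : K5) := by
  refine ⟨0, 1, dvd_zero _, fun hd => hP.not_unit (isUnit_of_dvd_one hd), by simp⟩

lemma not_dvd_mul {x y : RR} (hx : ¬ P ∣ x) (hy : ¬ P ∣ y) : ¬ P ∣ x * y := by
  intro h; rcases hP.2.2 _ _ h with h | h
  exacts [hx h, hy h]

lemma IAt.mul {x y : K5} (hx : IAt P x) (hy : IAt P y) : IAt P (x * y) := by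
  obtain ⟨f1, g1, hg1, rfl⟩ := hx
  obtain ⟨f2, g2, hg2, rfl⟩ := hy
  exact ⟨f1 * f2, g1 * g2, not_dvd_mul hP hg1 hg2,
    by rw [map_mul, map_mul]; ring⟩

lemma IAt.add {x y : K5} (hx : IAt P x) (hy : IAt P y) : IAt P (x + y) := by
  obtain ⟨f1, g1, hg1, rfl⟩ := hx
  obtain ⟨f2, g2, hg2, rfl⟩ := hy
  refine ⟨f1 * g2 + f2 * g1, g1 * g2, not_dvd_mul hP hg1 hg2, ?_⟩
  have h1 : am g1 ≠ 0 := am_ne (fun h => hg1 (h ▸ dvd_zero P))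
  have h2 : am g2 ≠ 0 := am_ne (fun h => hg2 (h ▸ dvd_zero P))
  field_simp
  simp only [map_add, map_mul]; ring

lemma ZAt.add {x y : K5} (hx : ZAt P x) (hy : ZAt P y) : ZAt P (x + y) := by
  obtain ⟨f1, g1, hf1, hg1, rfl⟩ := hx
  obtain ⟨f2, g2, hf2, hg2, rfl⟩ := hy
  refine ⟨f1 * g2 + f2 * g1, g1 * g2, dvd_add (hf1.mul_right _) (hf2.mul_right _),
    not_dvd_mul hP hg1 hg2, ?_⟩
  have h1 : am g1 ≠ 0 := am_ne (fun h => hg1 (h ▸ dvd_zero P))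
  have h2 : am g2 ≠ 0 := am_ne (fun h => hg2 (h ▸ dvd_zero P))
  field_simp
  simp only [map_add, map_mul]; ring

lemma ZAt.neg {x : K5} (hx : ZAt P x) : ZAt P (-x) := by
  obtain ⟨f, g, hf, hg, rfl⟩ := hx
  exact ⟨-f, g, hf.neg_right, hg, by rw [map_neg]; ring⟩

lemma ZAt.sub {x y : K5} (hx : ZAt P x) (hy : ZAt P y) : ZAt P (x - y) := by
  simpa [sub_eq_add_neg] using hx.add hP (ZAt.neg hP hy)

lemma IAt.mul_zAt {x y : K5} (hx : IAt P x) (hy : ZAt P y) : ZAt P (x * y) := by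
  obtain ⟨f1, g1, hg1, rfl⟩ := hx
  obtain ⟨f2, g2, hf2, hg2, rfl⟩ := hy
  exact ⟨f1 * f2, g1 * g2, hf2.mul_left _, not_dvd_mul hP hg1 hg2,
    by rw [map_mul, map_mul]; ring⟩

lemma ZAt.mul_iAt {x y : K5} (hx : ZAt P x) (hy : IAt P y) : ZAt P (x * y) := by
  have := IAt.mul_zAt hP hy hx; rwa [mul_comm] at this

lemma UAt.mul {x y : K5} (hx : UAt P x) (hy : UAt P y) : UAt P (x * y) := by
  obtain ⟨f1, g1, hf1, hg1, rfl⟩ := hx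
  obtain ⟨f2, g2, hf2, hg2, rfl⟩ := hy
  exact ⟨f1 * f2, g1 * g2, not_dvd_mul hP hf1 hf2, not_dvd_mul hP hg1 hg2,
    by rw [map_mul, map_mul]; ring⟩

lemma UAt.inv {x : K5} (hx : UAt P x) : UAt P x⁻¹ := by
  obtain ⟨f, g, hf, hg, rfl⟩ := hx
  exact ⟨g, f, hg, hf, by rw [inv_div]⟩

lemma UAt.ne_zero {x : K5} (hx : UAt P x) : x ≠ 0 := by
  obtain ⟨f, g, hf, hg, rfl⟩ := hx
  have h1 : am f ≠ 0 := am_ne (fun h => hf (h ▸ dvd_zero P))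
  have h2 : am g ≠ 0 := am_ne (fun h => hg (h ▸ dvd_zero P))
  exact div_ne_zero h1 h2

lemma uAt_one : UAt P (1 : K5) := by
  have h1 : ¬ P ∣ (1 : RR) := fun hd => hP.not_unit (isUnit_of_dvd_one hd)
  exact ⟨1, 1, h1, h1, by simp⟩

lemma UAt.pow {x : K5} (hx : UAt P x) (m : ℕ) : UAt P (x ^ m) := by
  induction m with
  | zero => simpa using uAt_one hP
  | succ m ih => rw [pow_succ]; exact ih.mul hP hx

lemma UAt.zpow {x : K5} (hx : UAt P x) (m : ℤ) : UAt P (x ^ m) := by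
  cases m with
  | ofNat m => simpa using hx.pow hP m
  | negSucc m => rw [zpow_negSucc]; exact (hx.pow hP (m+1)).inv hP

lemma UAt.prod {ι : Type*} {s : Finset ι} {f : ι → K5}
    (h : ∀ i ∈ s, UAt P (f i)) : UAt P (∏ i ∈ s, f i) := by
  classical
  induction s using Finset.induction with
  | empty => simpa using uAt_one hP
  | @insert _ _ hx ih =>
    rw [Finset.prod_insert hx]
    exact (h _ (Finset.mem_insert_self _ _)).mul hP
      (ih (fun i hi => h i (Finset.mem_insert_of_mem hi)))

lemma IAt.prod {ι : Type*} {s : Finset ι} {f : ι → K5}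
    (h : ∀ i ∈ s, IAt P (f i)) : IAt P (∏ i ∈ s, f i) := by
  classical
  induction s using Finset.induction with
  | empty => simpa using (uAt_one hP).iAt hP
  | @insert _ _ hx ih =>
    rw [Finset.prod_insert hx]
    exact (h _ (Finset.mem_insert_self _ _)).mul hP
      (ih (fun i hi => h i (Finset.mem_insert_of_mem hi)))

/-- congruence modulo `P` in the localized sense -/
def CAt (P : RR) (x y : K5) : Prop := ZAt P (x - y)

lemma CAt.zAt {x y : K5} (h : CAt P x y) (hy : ZAt P y) : ZAt P x := by
  simpa using ZAt.add hP h hy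

lemma cAt_refl {x : K5} : CAt P x x := by simpa [CAt] using zAt_zero hP

lemma CAt.mul {x x' y y' : K5} (hx : CAt P x x') (hy : CAt P y y')
    (hx' : IAt P x') (hy' : IAt P y) : CAt P (x * y) (x' * y') := by
  have h : x * y - x' * y' = (x - x') * y + x' * (y - y') := by ring
  rw [CAt, h]
  exact (ZAt.mul_iAt hP hx hy').add hP (IAt.mul_zAt hP hx' hy)

lemma CAt.add {x x' y y' : K5} (hx : CAt P x x') (hy : CAt P y y') :
    CAt P (x + y) (x' + y') := by
  have h : x + y - (x' + y') = (x - x') + (y - y') := by ring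
  rw [CAt, h]; exact ZAt.add hP hx hy

lemma CAt.prod {ι : Type*} {s : Finset ι} {f g : ι → K5}
    (hf : ∀ i ∈ s, IAt P (f i)) (hg : ∀ i ∈ s, IAt P (g i))
    (h : ∀ i ∈ s, CAt P (f i) (g i)) :
    CAt P (∏ i ∈ s, f i) (∏ i ∈ s, g i) := by
  classical
  induction s using Finset.induction with
  | empty => simpa using cAt_refl hP
  | @insert j s hx ih =>
    rw [Finset.prod_insert hx, Finset.prod_insert hx]
    exact CAt.mul hP (h _ (Finset.mem_insert_self _ _))
      (ih (fun i hi => hf i (Finset.mem_insert_of_mem hi))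
          (fun i hi => hg i (Finset.mem_insert_of_mem hi))
          (fun i hi => h i (Finset.mem_insert_of_mem hi)))
      (hg _ (Finset.mem_insert_self _ _))
      (IAt.prod hP (fun i hi => hf i (Finset.mem_insert_of_mem hi)))

lemma ZAt.of_two_mul {x : K5} (h : ZAt P (x + x)) : ZAt P x := by
  obtain ⟨f, g, hf, hg, hx⟩ := h
  have h2 : IsUnit (2 : RR) :=
    IsUnit.of_mul_eq_one (a := 2) (MvPolynomial.C (2⁻¹ : ℚ))
      (by rw [show (2:RR) = MvPolynomial.C (2:ℚ) from (map_ofNat (MvPolynomial.C : ℚ →+* RR) 2).symm,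
        ← map_mul]; norm_num)
  refine ⟨f, 2 * g, hf, not_dvd_mul hP (fun hd => hP.not_unit (isUnit_of_dvd_unit hd h2)) hg, ?_⟩
  have hgg : am g ≠ 0 := am_ne (fun h0 => hg (h0 ▸ dvd_zero P))
  have h2K : (2 : K5) ≠ 0 := by
    rw [← map_ofNat am 2]; exact am_ne (by norm_num)
  rw [map_mul, map_ofNat]
  rw [eq_div_iff (mul_ne_zero h2K hgg)]
  have hx' : (x + x) * am g = am f := by rw [hx]; field_simp
  linear_combination hx'

end Calc

/- ------------------- atoms ------------------- -/

lemma q_eq : q = am (X 0) := rfl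
lemma a_eq : a = am (X 1) := rfl
lemma b_eq : b = am (X 2) := rfl
lemma c_eq : c = am (X 3) := rfl
lemma e_eq : e = am (X 4) := rfl

lemma q_ne : (q : K5) ≠ 0 := by
  rw [q_eq]; exact am_ne (MvPolynomial.X_ne_zero 0)

lemma X0_pow_ne (m : ℕ) : ((X 0 : RR) ^ m) ≠ 0 := pow_ne_zero _ (MvPolynomial.X_ne_zero 0)

section Atoms
variable {N : ℕ} (hN : 0 < N)
include hN

lemma not_dvd_X_pow (j : ℕ) : ¬ Phi N ∣ (X 0 : RR) ^ j := by
  have h : ((X 0 : RR) ^ j) = PtoR (Polynomial.X ^ j) := by simp [PtoR]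
  rw [h]
  exact Phi_not_dvd_PtoR (cyclo_not_dvd_X_pow hN j)

lemma uAt_q_zpow (m : ℤ) : UAt (Phi N) (q ^ m) := by
  cases m with
  | ofNat m =>
    refine ⟨X 0 ^ m, 1, not_dvd_X_pow hN m, fun hd => (prime_Phi hN).not_unit (isUnit_of_dvd_one hd), ?_⟩
    simp [q_eq, map_pow]
  | negSucc m =>
    refine ⟨1, X 0 ^ (m + 1), fun hd => (prime_Phi hN).not_unit (isUnit_of_dvd_one hd), not_dvd_X_pow hN (m+1), ?_⟩
    rw [zpow_negSucc, q_eq, map_pow, map_one]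
    rw [inv_eq_one_div]

omit hN in
lemma one_sub_q_pow_nat (m : ℕ) : (1 : K5) - q ^ (m : ℤ) = am (1 - X 0 ^ m) := by
  rw [zpow_natCast, q_eq, map_sub, map_one, map_pow]

lemma uAt_one_sub_q (m : ℤ) (h : ¬ (N : ℤ) ∣ m) : UAt (Phi N) (1 - q ^ m) := by
  have hnd : ∀ m' : ℕ, ¬ (N ∣ m') → ¬ Phi N ∣ (1 - X 0 ^ m' : RR) := by
    intro m' hm'
    have h1 : (1 - X 0 ^ m' : RR) = PtoR (-(Polynomial.X ^ m' - 1)) := by simp [PtoR]; try ring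
    rw [h1]
    refine Phi_not_dvd_PtoR (fun hd => cyclo_not_dvd_X_pow_sub_one hN hm' ((dvd_neg).mp hd))
  rcases le_or_gt 0 m with hm | hm
  · lift m to ℕ using hm
    refine ⟨1 - X 0 ^ m, 1, hnd m (fun hd => h (Int.natCast_dvd_natCast.mpr hd)),
      fun hd => (prime_Phi hN).not_unit (isUnit_of_dvd_one hd), ?_⟩
    rw [← one_sub_q_pow_nat]; simp
  · obtain ⟨m', rfl⟩ : ∃ m' : ℕ, m = -(m' : ℤ) :=
      ⟨m.natAbs, by omega⟩
    have hm' : ¬ N ∣ m' := fun hd => h (by simpa using (Int.natCast_dvd_natCast.mpr hd).neg_right)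
    refine ⟨X 0 ^ m' - 1, X 0 ^ m', fun hd => hnd m' hm' ?_, not_dvd_X_pow hN m', ?_⟩
    · have h1 : (1 - X 0 ^ m' : RR) = -(X 0 ^ m' - 1) := by ring
      rw [h1]; exact hd.neg_right
    · rw [zpow_neg, zpow_natCast, q_eq, map_sub, map_pow, map_one]
      have hq0 : am (X 0) ≠ 0 := am_ne (MvPolynomial.X_ne_zero 0)
      field_simp

lemma zAt_one_sub_q (m : ℤ) (h : (N : ℤ) ∣ m) : ZAt (Phi N) (1 - q ^ m) := by
  have hdvd : ∀ m' : ℕ, N ∣ m' → 0 < m' → Phi N ∣ (1 - X 0 ^ m' : RR) := by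
    intro m' hm' hp
    have h1 : (1 - X 0 ^ m' : RR) = PtoR (-(Polynomial.X ^ m' - 1)) := by simp [PtoR]; try ring
    rw [h1]
    exact Phi_dvd_PtoR ((cyclo_dvd_X_pow_sub_one hp hm').neg_right)
  rcases lt_trichotomy m 0 with hm | hm | hm
  · obtain ⟨m', rfl⟩ : ∃ m' : ℕ, m = -(m' : ℤ) := ⟨m.natAbs, by omega⟩
    have hm' : N ∣ m' := by
      have h2 := (Int.dvd_neg.mpr h)
      simpa using Int.natCast_dvd_natCast.mp (by simpa using h2)
    have hp : 0 < m' := by omega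
    refine ⟨X 0 ^ m' - 1, X 0 ^ m', ?_, not_dvd_X_pow hN m', ?_⟩
    · have h1 : (X 0 ^ m' - 1 : RR) = -(1 - X 0 ^ m') := by ring
      rw [h1]; exact (hdvd m' hm' hp).neg_right
    · rw [zpow_neg, zpow_natCast, q_eq, map_sub, map_pow, map_one]
      have hq0 : am (X 0) ≠ 0 := am_ne (MvPolynomial.X_ne_zero 0)
      field_simp
  · subst hm; simpa using zAt_zero (prime_Phi hN)
  · lift m to ℕ using le_of_lt hm
    have hm' : N ∣ m := Int.natCast_dvd_natCast.mp h
    refine ⟨1 - X 0 ^ m, 1, hdvd m hm' (by exact_mod_cast hm),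
      fun hd => (prime_Phi hN).not_unit (isUnit_of_dvd_one hd), ?_⟩
    rw [← one_sub_q_pow_nat]; simp

end Atoms

/- ------------------- variable atoms ------------------- -/

section Atoms2
variable {N : ℕ} (hN : 0 < N)
include hN

lemma uAt_var (i : Fin 5) : UAt (Phi N) (am (X i)) := by
  refine ⟨X i, 1, ?_, fun hd => (prime_Phi hN).not_unit (isUnit_of_dvd_one hd), by simp⟩
  rcases eq_or_ne i 0 with rfl | hi
  · simpa using not_dvd_X_pow hN 1
  · refine Phi_not_dvd_hom hN (Function.update MvPolynomial.X i 1)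
      (Function.update_of_ne (Ne.symm hi) _ _) ?_
    simp [ψm, Function.update_self]

lemma not_dvd_upd {f : RR} (i : Fin 5) (hi : i ≠ 0) (t : RR)
    (hu : IsUnit (ψm (Function.update MvPolynomial.X i t) f)) : ¬ Phi N ∣ f :=
  Phi_not_dvd_hom hN _ (Function.update_of_ne (Ne.symm hi) _ _) hu

lemma uAt_one_sub_mul (i : Fin 5) (hi : i ≠ 0) (m : ℤ) :
    UAt (Phi N) (1 - am (X i) * q ^ m) := by
  have hq0 : am (X 0) ≠ 0 := am_ne (MvPolynomial.X_ne_zero 0)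
  rcases le_or_gt 0 m with hm | hm
  · lift m to ℕ using hm
    refine ⟨1 - X i * X 0 ^ m, 1, ?_, fun hd => (prime_Phi hN).not_unit (isUnit_of_dvd_one hd), ?_⟩
    · refine not_dvd_upd hN i hi 0 ?_
      have h1 : ψm (Function.update MvPolynomial.X i 0) (1 - X i * X 0 ^ m) = 1 := by
        simp [ψm, Function.update_self, Function.update_of_ne (Ne.symm hi)]
      rw [h1]; exact isUnit_one
    · simp [zpow_natCast, q_eq, map_sub, map_mul, map_pow]
  · obtain ⟨mm, rfl⟩ : ∃ mm : ℕ, m = -(mm : ℤ) := ⟨m.natAbs, by omega⟩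
    refine ⟨X 0 ^ mm - X i, X 0 ^ mm, ?_, not_dvd_X_pow hN mm, ?_⟩
    · refine not_dvd_upd hN i hi (X 0 ^ mm - 1) ?_
      have h1 : ψm (Function.update MvPolynomial.X i (X 0 ^ mm - 1)) (X 0 ^ mm - X i) = 1 := by
        simp [ψm, Function.update_self, Function.update_of_ne (Ne.symm hi)]
      rw [h1]; exact isUnit_one
    · rw [zpow_neg, zpow_natCast, q_eq, map_sub, map_pow]
      field_simp

lemma uAt_one_sub_div (i : Fin 5) (hi : i ≠ 0) (m : ℤ) :
    UAt (Phi N) (1 - q ^ m / am (X i)) := by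
  have hq0 : am (X 0) ≠ 0 := am_ne (MvPolynomial.X_ne_zero 0)
  have hv0 : am (X i) ≠ 0 := am_ne (MvPolynomial.X_ne_zero i)
  rcases le_or_gt 0 m with hm | hm
  · lift m to ℕ using hm
    refine ⟨X i - X 0 ^ m, X i, ?_, ?_, ?_⟩
    · refine not_dvd_upd hN i hi (X 0 ^ m + 1) ?_
      have h1 : ψm (Function.update MvPolynomial.X i (X 0 ^ m + 1)) (X i - X 0 ^ m) = 1 := by
        simp [ψm, Function.update_self, Function.update_of_ne (Ne.symm hi)]
      rw [h1]; exact isUnit_one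
    · refine not_dvd_upd hN i hi 1 ?_
      have h1 : ψm (Function.update MvPolynomial.X i 1) (X i) = 1 := by
        simp [ψm, Function.update_self]
      rw [h1]; exact isUnit_one
    · rw [zpow_natCast, q_eq, map_sub, map_pow]
      field_simp
  · obtain ⟨mm, rfl⟩ : ∃ mm : ℕ, m = -(mm : ℤ) := ⟨m.natAbs, by omega⟩
    refine ⟨X i * X 0 ^ mm - 1, X i * X 0 ^ mm, ?_, ?_, ?_⟩
    · refine not_dvd_upd hN i hi 0 ?_
      have h1 : ψm (Function.update MvPolynomial.X i 0) (X i * X 0 ^ mm - 1) = -1 := by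
        simp [ψm, Function.update_self, Function.update_of_ne (Ne.symm hi)]
      rw [h1]; exact IsUnit.neg isUnit_one
    · refine not_dvd_mul (prime_Phi hN) ?_ (not_dvd_X_pow hN mm)
      refine not_dvd_upd hN i hi 1 ?_
      have h1 : ψm (Function.update MvPolynomial.X i 1) (X i) = 1 := by
        simp [ψm, Function.update_self]
      rw [h1]; exact isUnit_one
    · rw [zpow_neg, zpow_natCast, q_eq, map_sub, map_mul, map_pow, map_one]
      field_simp
      try ring

end Atoms2

/- ------------------- structure of the summand ------------------- -/

noncomputable def PNf (d : ℕ) (r : ℤ) (i : ℕ) : K5 := 1 - q ^ (r + d * i : ℤ)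
noncomputable def PDf (d : ℕ) (i : ℕ) : K5 := 1 - q ^ ((d : ℤ) * (i + 1))
noncomputable def VNf (d : ℕ) (r : ℤ) (i : ℕ) : K5 :=
  (1 - c * q ^ (r + d * i : ℤ)) * (1 - e * q ^ (r + d * i : ℤ)) *
  (1 - q ^ (r + d * i : ℤ) / b) * (1 - a * q ^ (r + d * i : ℤ)) *
  (1 - q ^ (r + d * i : ℤ) / a)
noncomputable def VDf (d : ℕ) (i : ℕ) : K5 :=
  (1 - q ^ ((d : ℤ) * (i + 1)) / c) * (1 - q ^ ((d : ℤ) * (i + 1)) / e) *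
  (1 - b * q ^ ((d : ℤ) * (i + 1))) * (1 - q ^ ((d : ℤ) * (i + 1)) / a) *
  (1 - a * q ^ ((d : ℤ) * (i + 1)))
noncomputable def PN (d : ℕ) (r : ℤ) (k : ℕ) : K5 := ∏ i ∈ range k, PNf d r i
noncomputable def PD (d : ℕ) (k : ℕ) : K5 := ∏ i ∈ range k, PDf d i
noncomputable def VN (d : ℕ) (r : ℤ) (k : ℕ) : K5 := ∏ i ∈ range k, VNf d r i
noncomputable def VD (d : ℕ) (k : ℕ) : K5 := ∏ i ∈ range k, VDf d i
noncomputable def Vv (d : ℕ) (r : ℤ) (k : ℕ) : K5 :=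
  VN d r k * (VD d k)⁻¹ * (b / (c * e)) ^ k * q ^ ((2 * d - 3 * r) * k : ℤ)
lemma qpow_nat (m : ℕ) : (q : K5) ^ m = q ^ (m : ℤ) := (zpow_natCast q m).symm

lemma qexp_nat (d i : ℕ) : (((q : K5) ^ d) ^ i) = q ^ ((d:ℤ) * i) := by
  rw [← pow_mul, qpow_nat (d * i)]
  push_cast
  ring

lemma qexp_nat' (d i : ℕ) : (q : K5) ^ d * (((q : K5) ^ d) ^ i) = q ^ ((d:ℤ) * (i + 1)) := by
  rw [← pow_succ', ← pow_mul, qpow_nat (d * (i + 1))]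
  push_cast
  ring

lemma qPoch_q_r (d : ℕ) (r : ℤ) (k : ℕ) : qPoch (q ^ r) (q ^ d) k = PN d r k := by
  unfold qPoch PN PNf
  refine Finset.prod_congr rfl (fun i _ => ?_)
  rw [qexp_nat, ← zpow_add₀ q_ne]

lemma qPoch_mul_var (x : K5) (d : ℕ) (r : ℤ) (k : ℕ) :
    qPoch (x * q ^ r) (q ^ d) k = ∏ i ∈ range k, (1 - x * q ^ (r + d * i : ℤ)) := by
  unfold qPoch
  refine Finset.prod_congr rfl (fun i _ => ?_)
  rw [mul_assoc, qexp_nat, ← zpow_add₀ q_ne]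

lemma qPoch_div_var (x : K5) (d : ℕ) (r : ℤ) (k : ℕ) :
    qPoch (q ^ r / x) (q ^ d) k = ∏ i ∈ range k, (1 - q ^ (r + d * i : ℤ) / x) := by
  unfold qPoch
  refine Finset.prod_congr rfl (fun i _ => ?_)
  rw [div_mul_eq_mul_div, qexp_nat, ← zpow_add₀ q_ne]

lemma qPoch_q_d (d : ℕ) (k : ℕ) : qPoch (q ^ d) (q ^ d) k = PD d k := by
  unfold qPoch PD PDf
  refine Finset.prod_congr rfl (fun i _ => ?_)
  rw [qexp_nat']

lemma qPoch_d_div_var (x : K5) (d : ℕ) (k : ℕ) :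
    qPoch (q ^ d / x) (q ^ d) k = ∏ i ∈ range k, (1 - q ^ ((d:ℤ) * (i+1)) / x) := by
  unfold qPoch
  refine Finset.prod_congr rfl (fun i _ => ?_)
  rw [div_mul_eq_mul_div, qexp_nat']

lemma qPoch_d_mul_var_right (x : K5) (d : ℕ) (k : ℕ) :
    qPoch (q ^ d * x) (q ^ d) k = ∏ i ∈ range k, (1 - x * q ^ ((d:ℤ) * (i+1))) := by
  unfold qPoch
  refine Finset.prod_congr rfl (fun i _ => ?_)
  rw [show (q:K5)^d * x * ((q:K5)^d)^i = x * ((q:K5)^d * ((q:K5)^d)^i) by ring, qexp_nat']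

lemma qPoch_d_mul_var_left (x : K5) (d : ℕ) (k : ℕ) :
    qPoch (x * q ^ d) (q ^ d) k = ∏ i ∈ range k, (1 - x * q ^ ((d:ℤ) * (i+1))) := by
  unfold qPoch
  refine Finset.prod_congr rfl (fun i _ => ?_)
  rw [mul_assoc, qexp_nat']

lemma VN_split (d : ℕ) (r : ℤ) (k : ℕ) :
    VN d r k = (∏ i ∈ range k, (1 - c * q ^ (r + d * i : ℤ))) *
      (∏ i ∈ range k, (1 - e * q ^ (r + d * i : ℤ))) *
      (∏ i ∈ range k, (1 - q ^ (r + d * i : ℤ) / b)) *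
      (∏ i ∈ range k, (1 - a * q ^ (r + d * i : ℤ))) *
      (∏ i ∈ range k, (1 - q ^ (r + d * i : ℤ) / a)) := by
  unfold VN VNf
  rw [Finset.prod_mul_distrib, Finset.prod_mul_distrib, Finset.prod_mul_distrib,
    Finset.prod_mul_distrib]

lemma VD_split (d : ℕ) (k : ℕ) :
    VD d k = (∏ i ∈ range k, (1 - q ^ ((d:ℤ) * (i+1)) / c)) *
      (∏ i ∈ range k, (1 - q ^ ((d:ℤ) * (i+1)) / e)) *
      (∏ i ∈ range k, (1 - b * q ^ ((d:ℤ) * (i+1)))) *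
      (∏ i ∈ range k, (1 - q ^ ((d:ℤ) * (i+1)) / a)) *
      (∏ i ∈ range k, (1 - a * q ^ ((d:ℤ) * (i+1)))) := by
  unfold VD VDf
  rw [Finset.prod_mul_distrib, Finset.prod_mul_distrib, Finset.prod_mul_distrib,
    Finset.prod_mul_distrib]

lemma master (d : ℕ) (r : ℤ) (k : ℕ) :
    lemmaTerm d r k =
      (1 - q)⁻¹ * (1 - q ^ (2 * d * k + r : ℤ)) * PN d r k * (PD d k)⁻¹ * Vv d r k := by
  unfold lemmaTerm qIntZ Vv
  rw [qPoch_q_r, qPoch_mul_var c, qPoch_mul_var e, qPoch_div_var b, qPoch_mul_var a,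
    qPoch_div_var a, qPoch_q_d, qPoch_d_div_var c, qPoch_d_div_var e,
    qPoch_d_mul_var_right b, qPoch_d_div_var a, qPoch_d_mul_var_left a, VN_split, VD_split]
  simp only [div_eq_mul_inv, mul_inv]
  ring


/- ------------------- key section: fixed cyclotomic level ------------------- -/

def mSetN (Nn m2 k : ℕ) : Finset ℕ := (range (k / Nn)).image (fun t => t * Nn + m2)
def mSetD (Nn k : ℕ) : Finset ℕ := (range (k / Nn)).image (fun t => t * Nn + (Nn - 1))

lemma one_sub_q_ne {m : ℤ} (hm : m ≠ 0) : (1 : K5) - q ^ m ≠ 0 := by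
  intro h
  have h1 : (q : K5) ^ m = 1 := by
    have := sub_eq_zero.mp h; exact this.symm
  have h2 : ∀ mm : ℕ, 0 < mm → (q : K5) ^ (mm : ℤ) ≠ 1 := by
    intro mm hmm hq1
    rw [zpow_natCast, q_eq, ← map_pow, show (1 : K5) = am 1 from (map_one am).symm] at hq1
    have h3 := am_inj hq1
    have h4 := congrArg (MvPolynomial.eval (fun _ => (0:ℚ))) h3
    simp [hmm.ne'] at h4
  rcases lt_trichotomy m 0 with hm' | hm' | hm'
  · obtain ⟨mm, rfl⟩ : ∃ mm : ℕ, m = -(mm : ℤ) := ⟨m.natAbs, by omega⟩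
    have : (q : K5) ^ ((mm : ℤ)) = 1 := by
      rw [zpow_neg] at h1
      have := congrArg (·⁻¹) h1
      simpa using this
    exact h2 mm (by omega) this
  · exact hm hm'
  · exact h2 m.toNat (by omega) (by rw [show ((m.toNat : ℕ) : ℤ) = m by omega]; exact h1)

lemma one_sub_q_flip (m : ℤ) : (1 : K5) - q ^ (-m) = -(q ^ (-m)) * (1 - q ^ m) := by
  have h : (q:K5) ^ (-m) * q ^ m = 1 := by
    rw [← zpow_add₀ q_ne]; simp
  linear_combination -h

section KeyA
variable {N d : ℕ} {r : ℤ} {m2 : ℕ}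
variable (hN2 : 2 ≤ N) (hd : 0 < d) (hgcd : Nat.gcd d N = 1)
  (hm2 : m2 < N) (hm2r : (N:ℤ) ∣ ((d:ℤ) * m2 + r))

include hN2

lemma iAt_one_sub_q (m : ℤ) : IAt (Phi N) (1 - q ^ m) := by
  have hN : 0 < N := by omega
  rcases le_or_gt 0 m with hm | hm
  · lift m to ℕ using hm
    rw [one_sub_q_pow_nat]
    exact iAt_poly (prime_Phi hN) _
  · obtain ⟨m', rfl⟩ : ∃ m' : ℕ, m = -(m' : ℤ) := ⟨m.natAbs, by omega⟩
    refine ⟨X 0 ^ m' - 1, X 0 ^ m', not_dvd_X_pow hN m', ?_⟩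
    rw [zpow_neg, zpow_natCast, q_eq, map_sub, map_pow, map_one]
    have hq0 : am (X 0) ≠ 0 := am_ne (MvPolynomial.X_ne_zero 0)
    field_simp

lemma cofRR {m : ℕ} (hdvd : N ∣ m) (hm : 0 < m) :
    ∃ Cf : RR, (1 - (X 0 : RR) ^ m) = Phi N * Cf ∧ ¬ Phi N ∣ Cf := by
  have hN : 0 < N := by omega
  obtain ⟨c₀, hc₀⟩ := cyclo_dvd_X_pow_sub_one hm hdvd
  refine ⟨PtoR (-c₀), ?_, ?_⟩
  · have : (1 - (X 0 : RR) ^ m) = PtoR (-(Polynomial.X ^ m - 1)) := by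
      simp [PtoR]; try ring
    rw [this, hc₀]
    rw [show (-(Polynomial.cyclotomic N ℚ * c₀)) = Polynomial.cyclotomic N ℚ * (-c₀) by ring,
      map_mul]
    rfl
  · intro hdd
    have h1 : Polynomial.cyclotomic N ℚ ∣ -c₀ := dvd_of_PtoR_dvd hdd
    have h2 : Polynomial.cyclotomic N ℚ * Polynomial.cyclotomic N ℚ ∣ Polynomial.X ^ m - 1 := by
      obtain ⟨w, hw⟩ := h1
      exact ⟨-w, by rw [hc₀, show c₀ = -(-c₀) by ring, hw]; ring⟩
    exact (phi0_prime hN).not_unit (squarefree_X_pow_sub_one hm _ h2)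

lemma iAt_pair {e1 : ℤ} {e2 : ℕ} (h1 : (N:ℤ) ∣ e1) (h2 : N ∣ e2) (hp : 0 < e2) :
    IAt (Phi N) ((1 - q ^ e1) * ((1 - q ^ (e2 : ℤ))⁻¹)) := by
  have hN : 0 < N := by omega
  have hprime := prime_Phi (N := N) hN
  have hΦ0 : Phi N ≠ 0 := hprime.ne_zero
  obtain ⟨C2, hC2, hC2'⟩ := cofRR hN2 h2 hp
  have hrep2 : (1 : K5) - q ^ (e2 : ℤ) = am (Phi N) * am C2 := by
    rw [one_sub_q_pow_nat, hC2, map_mul]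
  rcases eq_or_ne e1 0 with rfl | he1
  · rw [show (1:K5) - q ^ (0:ℤ) = 0 by simp]
    rw [zero_mul]
    exact (zAt_zero hprime).iAt hprime
  rcases le_or_gt 0 e1 with he | he
  · lift e1 to ℕ using he
    have hp1 : 0 < e1 := by omega
    obtain ⟨C1, hC1, _⟩ := cofRR hN2 (Int.natCast_dvd_natCast.mp h1) hp1
    have hrep1 : (1 : K5) - q ^ (e1 : ℤ) = am (Phi N) * am C1 := by
      rw [one_sub_q_pow_nat, hC1, map_mul]
    have hamΦ : am (Phi N) ≠ 0 := am_ne hΦ0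
    refine ⟨C1, C2, hC2', ?_⟩
    rw [hrep1, hrep2, mul_inv, mul_mul_mul_comm, mul_inv_cancel₀ hamΦ, one_mul, div_eq_mul_inv]
  · obtain ⟨e1', rfl⟩ : ∃ e1' : ℕ, e1 = -(e1' : ℤ) := ⟨e1.natAbs, by omega⟩
    have hp1 : 0 < e1' := by omega
    have hdvd1 : N ∣ e1' := by
      have := h1.neg_right
      simpa using Int.natCast_dvd_natCast.mp (by simpa using this)
    obtain ⟨C1, hC1, _⟩ := cofRR hN2 hdvd1 hp1
    have hrep1 : (1 : K5) - q ^ ((e1' : ℕ) : ℤ) = am (Phi N) * am C1 := by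
      rw [one_sub_q_pow_nat, hC1, map_mul]
    rw [one_sub_q_flip, hrep1, hrep2]
    have hamΦ : am (Phi N) ≠ 0 := am_ne hΦ0
    have huq : UAt (Phi N) (-(q ^ (-(e1' : ℤ)))) := by
      obtain ⟨f, g, hf, hg, hx⟩ := uAt_q_zpow hN (-(e1' : ℤ))
      exact ⟨-f, g, fun hdd => hf (by simpa using hdd.neg_right), hg,
        by rw [hx, map_neg]; ring⟩
    obtain ⟨f, g, hf, hg, hx⟩ := huq
    refine ⟨f * C1, g * C2, not_dvd_mul hprime hg hC2', ?_⟩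
    rw [hx, map_mul, map_mul, mul_inv]
    have hg0 : am g ≠ 0 := am_ne (fun h0 => hg (h0 ▸ dvd_zero _))
    have hC20 : am C2 ≠ 0 := am_ne (fun h0 => hC2' (h0 ▸ dvd_zero _))
    field_simp

end KeyA


section KeyB
variable {N d : ℕ} {r : ℤ} {m2 : ℕ}
variable (hN2 : 2 ≤ N) (hd : 0 < d) (hgcd : Nat.gcd d N = 1)
  (hm2 : m2 < N) (hm2r : (N:ℤ) ∣ ((d:ℤ) * m2 + r))

lemma mSetN_subset (hm2' : m2 < N) (k : ℕ) : mSetN N m2 k ⊆ range k := by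
  intro i hi
  obtain ⟨t, ht, rfl⟩ := Finset.mem_image.mp hi
  rw [Finset.mem_range] at ht ⊢
  calc t * N + m2 < t * N + N := by omega
  _ = (t + 1) * N := by ring
  _ ≤ (k / N) * N := Nat.mul_le_mul_right N (by omega)
  _ ≤ k := Nat.div_mul_le_self k N

lemma mSetD_subset (hN' : 0 < N) (k : ℕ) : mSetD N k ⊆ range k := by
  intro i hi
  obtain ⟨t, ht, rfl⟩ := Finset.mem_image.mp hi
  rw [Finset.mem_range] at ht ⊢
  calc t * N + (N - 1) < t * N + N := by omega
  _ = (t + 1) * N := by ring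
  _ ≤ (k / N) * N := Nat.mul_le_mul_right N (by omega)
  _ ≤ k := Nat.div_mul_le_self k N

lemma mem_mSetD_iff (hN' : 0 < N) {k i : ℕ} (hik : i < k) :
    i ∈ mSetD N k ↔ N ∣ (i + 1) := by
  constructor
  · intro hi
    obtain ⟨t, ht, rfl⟩ := Finset.mem_image.mp hi
    have h2 : (t+1) * N = t * N + N := by ring
    have h2' : N * (t+1) = t * N + N := by ring
    exact ⟨t + 1, by omega⟩
  · intro ⟨s, hs⟩
    have hs1 : 1 ≤ s := by
      rcases Nat.eq_zero_or_pos s with rfl | h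
      · omega
      · exact h
    have key : s * N = N * s := by ring
    have hsub : (s - 1) * N = s * N - N := by rw [Nat.sub_mul, one_mul]
    have hge : N ≤ s * N := Nat.le_mul_of_pos_left N hs1
    refine Finset.mem_image.mpr ⟨s - 1, ?_, ?_⟩
    · rw [Finset.mem_range]
      have h3 : s ≤ k / N := by
        rw [Nat.le_div_iff_mul_le hN']
        omega
      omega
    · omega

include hN2 hd hgcd hm2 hm2r

lemma dvd_pairN (t : ℕ) : (N:ℤ) ∣ (r + (d:ℤ) * ((t * N + m2 : ℕ) : ℤ)) := by
  have h : (r + (d:ℤ) * ((t * N + m2 : ℕ) : ℤ)) = ((d:ℤ) * m2 + r) + (N:ℤ) * ((d:ℤ) * t) := by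
    push_cast; ring
  rw [h]
  exact dvd_add hm2r (Dvd.intro _ rfl)

lemma iAt_PNf (i : ℕ) : IAt (Phi N) (PNf d r i) := by
  unfold PNf
  exact iAt_one_sub_q hN2 _

lemma uAt_PDf (i : ℕ) (h : ¬ N ∣ (i + 1)) : UAt (Phi N) (PDf d i) := by
  unfold PDf
  refine uAt_one_sub_q (by omega) _ ?_
  intro hdvd
  have hco : IsCoprime (N:ℤ) (d:ℤ) := (Nat.isCoprime_iff_coprime.mpr hgcd).symm
  have h1 : (N:ℤ) ∣ ((i:ℤ) + 1) * (d:ℤ) := by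
    have : (d:ℤ) * ((i:ℤ) + 1) = ((i:ℤ)+1) * d := by ring
    rwa [this] at hdvd
  have h2 : (N:ℤ) ∣ ((i:ℤ) + 1) := hco.dvd_of_dvd_mul_right h1
  exact h (by exact_mod_cast h2)

lemma PDf_ne (i : ℕ) : PDf d i ≠ 0 := by
  unfold PDf
  exact one_sub_q_ne (by positivity)

lemma PD_ne (k : ℕ) : PD d k ≠ 0 := by
  unfold PD
  exact Finset.prod_ne_zero_iff.mpr (fun i _ => PDf_ne hN2 hd hgcd hm2 hm2r i)

lemma uAt_VNf (i : ℕ) : UAt (Phi N) (VNf d r i) := by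
  have hN' : 0 < N := by omega
  unfold VNf
  rw [c_eq, e_eq, a_eq, b_eq]
  exact ((((uAt_one_sub_mul hN' 3 (by decide) _).mul (prime_Phi hN')
    (uAt_one_sub_mul hN' 4 (by decide) _)).mul (prime_Phi hN')
    (uAt_one_sub_div hN' 2 (by decide) _)).mul (prime_Phi hN')
    (uAt_one_sub_mul hN' 1 (by decide) _)).mul (prime_Phi hN')
    (uAt_one_sub_div hN' 1 (by decide) _)

lemma uAt_VDf (i : ℕ) : UAt (Phi N) (VDf d i) := by
  have hN' : 0 < N := by omega
  unfold VDf
  rw [c_eq, e_eq, a_eq, b_eq]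
  exact ((((uAt_one_sub_div hN' 3 (by decide) _).mul (prime_Phi hN')
    (uAt_one_sub_div hN' 4 (by decide) _)).mul (prime_Phi hN')
    (uAt_one_sub_mul hN' 2 (by decide) _)).mul (prime_Phi hN')
    (uAt_one_sub_div hN' 1 (by decide) _)).mul (prime_Phi hN')
    (uAt_one_sub_mul hN' 1 (by decide) _)

lemma uAt_bce_pow (k : ℕ) : UAt (Phi N) ((b / (c * e)) ^ k) := by
  have hN' : 0 < N := by omega
  refine UAt.pow (prime_Phi hN') ?_ k
  rw [div_eq_mul_inv, b_eq, c_eq, e_eq]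
  exact (uAt_var hN' 2).mul (prime_Phi hN')
    (((uAt_var hN' 3).mul (prime_Phi hN') (uAt_var hN' 4)).inv (prime_Phi hN'))

lemma uAt_Vv (k : ℕ) : UAt (Phi N) (Vv d r k) := by
  have hN' : 0 < N := by omega
  unfold Vv VN VD
  exact (((UAt.prod (prime_Phi hN') (fun i _ => uAt_VNf hN2 hd hgcd hm2 hm2r i)).mul
    (prime_Phi hN')
    ((UAt.prod (prime_Phi hN') (fun i _ => uAt_VDf hN2 hd hgcd hm2 hm2r i)).inv
      (prime_Phi hN'))).mul (prime_Phi hN')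
    (uAt_bce_pow hN2 hd hgcd hm2 hm2r k)).mul (prime_Phi hN') (uAt_q_zpow hN' _)

lemma VD_ne (k : ℕ) : VD d k ≠ 0 := by
  unfold VD
  exact Finset.prod_ne_zero_iff.mpr
    (fun i _ => (uAt_VDf hN2 hd hgcd hm2 hm2r i).ne_zero (prime_Phi (by omega)))

lemma Vv_ne (k : ℕ) : Vv d r k ≠ 0 := (uAt_Vv hN2 hd hgcd hm2 hm2r k).ne_zero (prime_Phi (by omega))

lemma PNPD_decomp (k : ℕ) :
    PN d r k * (PD d k)⁻¹ =
      (∏ t ∈ range (k / N),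
        ((1 - q ^ (r + (d:ℤ) * ((t * N + m2 : ℕ) : ℤ))) *
          (1 - q ^ ((d * ((t+1) * N) : ℕ) : ℤ))⁻¹)) *
      (∏ i ∈ range k \ mSetN N m2 k, PNf d r i) *
      (∏ i ∈ range k \ mSetD N k, (PDf d i)⁻¹) := by
  have hN' : 0 < N := by omega
  have hinjN : ∀ x ∈ range (k / N), ∀ y ∈ range (k / N),
      x * N + m2 = y * N + m2 → x = y := by
    intro x _ y _ hxy
    exact Nat.eq_of_mul_eq_mul_right hN' (by omega)
  have hinjD : ∀ x ∈ range (k / N), ∀ y ∈ range (k / N),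
      x * N + (N-1) = y * N + (N-1) → x = y := by
    intro x _ y _ hxy
    exact Nat.eq_of_mul_eq_mul_right hN' (by omega)
  have h1 : PN d r k =
      (∏ i ∈ range k \ mSetN N m2 k, PNf d r i) *
      (∏ t ∈ range (k / N), PNf d r (t * N + m2)) := by
    rw [PN, ← Finset.prod_sdiff (mSetN_subset hm2 k), mSetN, Finset.prod_image hinjN]
  have h2 : PD d k =
      (∏ i ∈ range k \ mSetD N k, PDf d i) *
      (∏ t ∈ range (k / N), PDf d (t * N + (N-1))) := by
    rw [PD, ← Finset.prod_sdiff (mSetD_subset hN' k), mSetD, Finset.prod_image hinjD]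
  have h3 : ∀ t : ℕ, PNf d r (t * N + m2) = 1 - q ^ (r + (d:ℤ) * ((t * N + m2 : ℕ) : ℤ)) := by
    intro t; rfl
  have h4 : ∀ t : ℕ, PDf d (t * N + (N-1)) = 1 - q ^ ((d * ((t+1) * N) : ℕ) : ℤ) := by
    intro t
    unfold PDf
    congr 1
    congr 1
    push_cast [Nat.cast_sub (by omega : 1 ≤ N)]
    ring
  rw [h1, h2]
  rw [Finset.prod_congr rfl (fun t _ => h3 t), Finset.prod_congr rfl (fun t _ => h4 t)]
  simp only [Finset.prod_mul_distrib, Finset.prod_inv_distrib, mul_inv]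
  ring

lemma iAt_PN_PD (k : ℕ) : IAt (Phi N) (PN d r k * (PD d k)⁻¹) := by
  have hN' : 0 < N := by omega
  have hprime := prime_Phi (N := N) hN'
  rw [PNPD_decomp hN2 hd hgcd hm2 hm2r k]
  refine IAt.mul hprime (IAt.mul hprime (IAt.prod hprime (fun t _ => ?_))
    (IAt.prod hprime (fun i _ => (iAt_PNf hN2 hd hgcd hm2 hm2r i)))) ?_
  · exact iAt_pair hN2 (dvd_pairN hN2 hd hgcd hm2 hm2r t)
      (⟨d * (t+1), by ring⟩) (by positivity)
  · refine IAt.prod hprime (fun i hi => ?_)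
    obtain ⟨hik, hnm⟩ := Finset.mem_sdiff.mp hi
    rw [Finset.mem_range] at hik
    have hnd : ¬ N ∣ (i+1) := fun hdd => hnm ((mem_mSetD_iff hN' hik).mpr hdd)
    exact ((uAt_PDf hN2 hd hgcd hm2 hm2r i hnd).inv hprime).iAt hprime

end KeyB


/- ------------------- pairing congruences ------------------- -/

noncomputable def XFf (d : ℕ) (r : ℤ) (k i : ℕ) : K5 := PNf d r (k+i) * VNf d r (k+i)
noncomputable def YFf (d : ℕ) (k i : ℕ) : K5 := PDf d (k+i) * VDf d (k+i)
noncomputable def κf (d : ℕ) (r : ℤ) (k i : ℕ) : K5 :=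
  (c * e / b) * (q ^ (r + (d:ℤ) * ((k+i : ℕ) : ℤ))) ^ (6:ℕ)

lemma a_ne : (a : K5) ≠ 0 := by rw [a_eq]; exact am_ne (MvPolynomial.X_ne_zero 1)
lemma b_ne : (b : K5) ≠ 0 := by rw [b_eq]; exact am_ne (MvPolynomial.X_ne_zero 2)
lemma c_ne : (c : K5) ≠ 0 := by rw [c_eq]; exact am_ne (MvPolynomial.X_ne_zero 3)
lemma e_ne : (e : K5) ≠ 0 := by rw [e_eq]; exact am_ne (MvPolynomial.X_ne_zero 4)

lemma prod_q_zpow (t : ℕ) (f : ℕ → ℤ) :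
    (∏ i ∈ range t, (q : K5) ^ (f i)) = q ^ (∑ i ∈ range t, f i) := by
  induction t with
  | zero => simp
  | succ t ih =>
    rw [Finset.prod_range_succ, Finset.sum_range_succ, ih, ← zpow_add₀ q_ne]

lemma q_pow6 (m : ℤ) : ((q : K5) ^ m) ^ (6:ℕ) = q ^ (6 * m) := by
  rw [← zpow_natCast ((q:K5) ^ m) 6, ← zpow_mul]
  congr 1
  ring

lemma UAt.neg {P : RR} {x : K5} (hx : UAt P x) : UAt P (-x) := by
  obtain ⟨f, g, hf, hg, rfl⟩ := hx
  exact ⟨-f, g, fun hd => hf (by simpa using hd.neg_right), hg, by rw [map_neg]; ring⟩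

section KeyC
variable {N d : ℕ} {r : ℤ} {m2 : ℕ}
variable (hN2 : 2 ≤ N) (hd : 0 < d) (hgcd : Nat.gcd d N = 1)
  (hm2 : m2 < N) (hm2r : (N:ℤ) ∣ ((d:ℤ) * m2 + r))

include hN2

lemma pairQgen {E1 E2 S : ℤ} (hS : E1 + E2 = S) (hdvd : (N:ℤ) ∣ S) :
    CAt (Phi N) (1 - q ^ E1) (-(q ^ E1) * (1 - q ^ E2)) := by
  have hq : (q:K5) ^ E1 * q ^ E2 = q ^ S := by rw [← zpow_add₀ q_ne, hS]
  have heq : (1 - (q:K5) ^ E1) - (-(q ^ E1) * (1 - q ^ E2)) = 1 - q ^ S := by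
    linear_combination -hq
  rw [CAt, heq]
  exact zAt_one_sub_q (by omega) _ hdvd

lemma pairMulgen (v : K5) (hv : v ≠ 0) {E1 E2 S : ℤ} (hS : E1 + E2 = S)
    (hdvd : (N:ℤ) ∣ S) :
    CAt (Phi N) (1 - v * q ^ E1) (-(v * q ^ E1) * (1 - q ^ E2 / v)) := by
  have hq : (q:K5) ^ E1 * q ^ E2 = q ^ S := by rw [← zpow_add₀ q_ne, hS]
  have hvv : v * ((q:K5) ^ E2 / v) = q ^ E2 := by field_simp
  have heq : (1 - v * (q:K5) ^ E1) - (-(v * q ^ E1) * (1 - q ^ E2 / v)) = 1 - q ^ S := by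
    linear_combination (-((q:K5) ^ E1)) * hvv - hq
  rw [CAt, heq]
  exact zAt_one_sub_q (by omega) _ hdvd

lemma pairDivgen (v : K5) (hv : v ≠ 0) {E1 E2 S : ℤ} (hS : E1 + E2 = S)
    (hdvd : (N:ℤ) ∣ S) :
    CAt (Phi N) (1 - q ^ E1 / v) (-(q ^ E1 / v) * (1 - v * q ^ E2)) := by
  have hq : (q:K5) ^ E1 * q ^ E2 = q ^ S := by rw [← zpow_add₀ q_ne, hS]
  have hvv : ((q:K5) ^ E1 / v) * (v * q ^ E2) = q ^ E1 * q ^ E2 := by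
    field_simp
  have heq : (1 - (q:K5) ^ E1 / v) - (-(q ^ E1 / v) * (1 - v * q ^ E2)) = 1 - q ^ S := by
    linear_combination -hvv - hq
  rw [CAt, heq]
  exact zAt_one_sub_q (by omega) _ hdvd

set_option maxHeartbeats 2000000 in
lemma per_i (k t i : ℕ) (hit : i < t)
    (hdvdS : (N:ℤ) ∣ (r + (d:ℤ) * (2 * (k:ℤ) + (t:ℤ)))) :
    CAt (Phi N) (XFf d r k i) (κf d r k i * YFf d k (t-1-i)) := by
  have hN' : 0 < N := by omega
  have hprime := prime_Phi (N := N) hN'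
  unfold XFf YFf κf PNf VNf PDf VDf
  set E1 : ℤ := r + (d:ℤ) * ((k+i : ℕ) : ℤ) with hE1
  set E2 : ℤ := (d:ℤ) * (((k + (t-1-i) : ℕ) : ℤ) + 1) with hE2
  have hcast2 : ((k + (t-1-i) : ℕ) : ℤ) = (k:ℤ) + (t:ℤ) - 1 - i := by omega
  have hS : E1 + E2 = r + (d:ℤ) * (2 * (k:ℤ) + (t:ℤ)) := by
    rw [hE1, hE2, hcast2]; push_cast; ring
  have c1 := pairQgen hN2 hS hdvdS
  have c2 := pairMulgen hN2 c c_ne hS hdvdS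
  have c3 := pairMulgen hN2 e e_ne hS hdvdS
  have c4 := pairDivgen hN2 b b_ne hS hdvdS
  have c5 := pairMulgen hN2 a a_ne hS hdvdS
  have c6 := pairDivgen hN2 a a_ne hS hdvdS
  have uq : UAt (Phi N) ((q:K5) ^ E1) := uAt_q_zpow hN' E1
  have uL2 : UAt (Phi N) (1 - c * q ^ E1) := uAt_one_sub_mul hN' 3 (by decide) E1
  have uL3 : UAt (Phi N) (1 - e * q ^ E1) := uAt_one_sub_mul hN' 4 (by decide) E1
  have uL4 : UAt (Phi N) (1 - q ^ E1 / b) := uAt_one_sub_div hN' 2 (by decide) E1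
  have uL5 : UAt (Phi N) (1 - a * q ^ E1) := uAt_one_sub_mul hN' 1 (by decide) E1
  have uL6 : UAt (Phi N) (1 - q ^ E1 / a) := uAt_one_sub_div hN' 1 (by decide) E1
  have iq2 : IAt (Phi N) (1 - (q:K5) ^ E2) := iAt_one_sub_q hN2 _
  have iR1 : IAt (Phi N) (-((q:K5) ^ E1) * (1 - q ^ E2)) :=
    IAt.mul hprime ((uq.neg).iAt hprime) iq2
  have uc : UAt (Phi N) (c : K5) := uAt_var hN' 3
  have ue : UAt (Phi N) (e : K5) := uAt_var hN' 4
  have ua : UAt (Phi N) (a : K5) := uAt_var hN' 1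
  have iR2 : IAt (Phi N) (-(c * (q:K5) ^ E1) * (1 - q ^ E2 / c)) :=
    IAt.mul hprime (((uc.mul hprime uq).neg).iAt hprime)
      ((uAt_one_sub_div hN' 3 (by decide) E2).iAt hprime)
  have iR3 : IAt (Phi N) (-(e * (q:K5) ^ E1) * (1 - q ^ E2 / e)) :=
    IAt.mul hprime (((ue.mul hprime uq).neg).iAt hprime)
      ((uAt_one_sub_div hN' 4 (by decide) E2).iAt hprime)
  have iR4 : IAt (Phi N) (-((q:K5) ^ E1 / b) * (1 - b * q ^ E2)) := by
    refine IAt.mul hprime ?_ ((uAt_one_sub_mul hN' 2 (by decide) E2).iAt hprime)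
    rw [div_eq_mul_inv]
    exact ((uq.mul hprime ((uAt_var hN' 2).inv hprime)).neg).iAt hprime
  have iR5 : IAt (Phi N) (-(a * (q:K5) ^ E1) * (1 - q ^ E2 / a)) :=
    IAt.mul hprime (((ua.mul hprime uq).neg).iAt hprime)
      ((uAt_one_sub_div hN' 1 (by decide) E2).iAt hprime)
  have iR6 : IAt (Phi N) (-((q:K5) ^ E1 / a) * (1 - a * q ^ E2)) := by
    refine IAt.mul hprime ?_ ((uAt_one_sub_mul hN' 1 (by decide) E2).iAt hprime)
    rw [div_eq_mul_inv]
    exact ((uq.mul hprime (ua.inv hprime)).neg).iAt hprime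
  -- chain the six congruences
  have cc23 := CAt.mul hprime c2 c3 iR2 (uL3.iAt hprime)
  have cc234 := CAt.mul hprime cc23 c4 (IAt.mul hprime iR2 iR3) (uL4.iAt hprime)
  have cc2345 := CAt.mul hprime cc234 c5
    (IAt.mul hprime (IAt.mul hprime iR2 iR3) iR4) (uL5.iAt hprime)
  have cc23456 := CAt.mul hprime cc2345 c6
    (IAt.mul hprime (IAt.mul hprime (IAt.mul hprime iR2 iR3) iR4) iR5) (uL6.iAt hprime)
  have ccall := CAt.mul hprime c1 cc23456 iR1
    (((((uL2.mul hprime uL3).mul hprime uL4).mul hprime uL5).mul hprime uL6).iAt hprime)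
  have haa : (a:K5) * a⁻¹ = 1 := mul_inv_cancel₀ a_ne
  have hfin : (-((q:K5) ^ E1) * (1 - q ^ E2)) *
      ((-(c * (q:K5) ^ E1) * (1 - q ^ E2 / c)) * (-(e * (q:K5) ^ E1) * (1 - q ^ E2 / e)) *
        (-((q:K5) ^ E1 / b) * (1 - b * q ^ E2)) * (-(a * (q:K5) ^ E1) * (1 - q ^ E2 / a)) *
        (-((q:K5) ^ E1 / a) * (1 - a * q ^ E2))) =
      (c * e / b) * ((q:K5) ^ E1) ^ (6:ℕ) *
        ((1 - q ^ E2) *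
          ((1 - q ^ E2 / c) * (1 - q ^ E2 / e) * (1 - b * q ^ E2) * (1 - q ^ E2 / a) *
            (1 - a * q ^ E2))) := by
    calc (-((q:K5) ^ E1) * (1 - q ^ E2)) *
      ((-(c * (q:K5) ^ E1) * (1 - q ^ E2 / c)) * (-(e * (q:K5) ^ E1) * (1 - q ^ E2 / e)) *
        (-((q:K5) ^ E1 / b) * (1 - b * q ^ E2)) * (-(a * (q:K5) ^ E1) * (1 - q ^ E2 / a)) *
        (-((q:K5) ^ E1 / a) * (1 - a * q ^ E2))) =
        ((a:K5) * a⁻¹) * ((c * e / b) * ((q:K5) ^ E1) ^ (6:ℕ) *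
        ((1 - q ^ E2) *
          ((1 - q ^ E2 / c) * (1 - q ^ E2 / e) * (1 - b * q ^ E2) * (1 - q ^ E2 / a) *
            (1 - a * q ^ E2)))) := by
              simp only [div_eq_mul_inv]
              ring
      _ = _ := by rw [haa, one_mul]
  exact hfin ▸ ccall

end KeyC


section KeyD
variable {N d : ℕ} {r : ℤ} {m2 : ℕ}
variable (hN2 : 2 ≤ N) (hd : 0 < d) (hgcd : Nat.gcd d N = 1)
  (hm2 : m2 < N) (hm2r : (N:ℤ) ∣ ((d:ℤ) * m2 + r))

include hN2 hd hgcd hm2 hm2r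

lemma uAt_one_sub_q_one : UAt (Phi N) (1 - q) := by
  have h1 : (1 : K5) - q = 1 - q ^ (1:ℤ) := by rw [zpow_one]
  rw [h1]
  refine uAt_one_sub_q (by omega) 1 ?_
  intro hdd
  have := Int.le_of_dvd one_pos hdd
  omega

lemma iAt_front (k : ℕ) :
    IAt (Phi N) ((1 - q)⁻¹ * (1 - q ^ (2 * d * k + r : ℤ)) * Vv d r k) := by
  have hN' : 0 < N := by omega
  have hprime := prime_Phi (N := N) hN'
  exact (IAt.mul hprime
    (IAt.mul hprime (((uAt_one_sub_q_one hN2 hd hgcd hm2 hm2r).inv hprime).iAt hprime)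
      (iAt_one_sub_q hN2 _))
    ((uAt_Vv hN2 hd hgcd hm2 hm2r k).iAt hprime))

lemma case1 (k : ℕ) (hj : m2 < k % N) : ZAt (Phi N) (lemmaTerm d r k) := by
  have hN' : 0 < N := by omega
  have hprime := prime_Phi (N := N) hN'
  have hkeq : N * (k / N) + k % N = k := Nat.div_add_mod k N
  have hNl : N * (k / N) = (k / N) * N := by ring
  have hi₀k : (k / N) * N + m2 < k := by omega
  have hdvd : (N:ℤ) ∣ (r + (d:ℤ) * (((k / N) * N + m2 : ℕ) : ℤ)) :=
    dvd_pairN hN2 hd hgcd hm2 hm2r (k / N)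
  have hzPNf : ZAt (Phi N) (PNf d r ((k / N) * N + m2)) := by
    unfold PNf; exact zAt_one_sub_q hN' _ hdvd
  have hi₀mem : ((k / N) * N + m2) ∈ range k \ mSetN N m2 k := by
    rw [Finset.mem_sdiff, Finset.mem_range]
    refine ⟨hi₀k, fun hmem => ?_⟩
    obtain ⟨t, ht, heq⟩ := Finset.mem_image.mp hmem
    rw [Finset.mem_range] at ht
    have : t = k / N := Nat.eq_of_mul_eq_mul_right hN' (by omega)
    omega
  have hsplit : (∏ i ∈ range k \ mSetN N m2 k, PNf d r i) =
      PNf d r ((k / N) * N + m2) *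
        (∏ i ∈ (range k \ mSetN N m2 k).erase ((k / N) * N + m2), PNf d r i) :=
    (Finset.mul_prod_erase _ _ hi₀mem).symm
  have hZ : ZAt (Phi N) (PN d r k * (PD d k)⁻¹) := by
    rw [PNPD_decomp hN2 hd hgcd hm2 hm2r k, hsplit]
    have hgen : ∀ A B C D : K5, A * (B * C) * D = B * (A * C * D) := by intros; ring
    rw [hgen]
    refine ZAt.mul_iAt hprime hzPNf ?_
    refine IAt.mul hprime (IAt.mul hprime (IAt.prod hprime (fun t _ => ?_))
      (IAt.prod hprime (fun i _ => iAt_PNf hN2 hd hgcd hm2 hm2r i))) ?_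
    · exact iAt_pair hN2 (dvd_pairN hN2 hd hgcd hm2 hm2r t)
        (⟨d * (t+1), by ring⟩) (by positivity)
    · refine IAt.prod hprime (fun i hi => ?_)
      obtain ⟨hik, hnm⟩ := Finset.mem_sdiff.mp hi
      rw [Finset.mem_range] at hik
      have hnd : ¬ N ∣ (i+1) := fun hdd => hnm ((mem_mSetD_iff hN' hik).mpr hdd)
      exact ((uAt_PDf hN2 hd hgcd hm2 hm2r i hnd).inv hprime).iAt hprime
  rw [master]
  have hre : (1 - q)⁻¹ * (1 - q ^ (2 * d * k + r : ℤ)) * PN d r k * (PD d k)⁻¹ * Vv d r k =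
      ((1 - q)⁻¹ * (1 - q ^ (2 * d * k + r : ℤ)) * Vv d r k) *
        (PN d r k * (PD d k)⁻¹) := by ring
  rw [hre]
  exact IAt.mul_zAt hprime (iAt_front hN2 hd hgcd hm2 hm2r k) hZ

lemma case3 (k : ℕ) (h3 : m2 = 2 * (k % N)) : ZAt (Phi N) (lemmaTerm d r k) := by
  have hN' : 0 < N := by omega
  have hprime := prime_Phi (N := N) hN'
  have hkeq : N * (k / N) + k % N = k := Nat.div_add_mod k N
  have hdvdu : (N:ℤ) ∣ (2 * (d:ℤ) * (k:ℤ) + r) := by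
    have hkz : (k:ℤ) = (N:ℤ) * ((k / N : ℕ) : ℤ) + ((k % N : ℕ) : ℤ) := by
      exact_mod_cast hkeq.symm
    have hmz : ((m2:ℕ):ℤ) = 2 * ((k % N : ℕ) : ℤ) := by exact_mod_cast h3
    have h5 : (2 * (d:ℤ) * (k:ℤ) + r) =
        ((d:ℤ) * m2 + r) + (N:ℤ) * (2 * (d:ℤ) * ((k / N : ℕ) : ℤ)) := by
      rw [hkz, hmz]; ring
    rw [h5]
    exact dvd_add hm2r (Dvd.intro _ rfl)
  rw [master]
  have hre : (1 - q)⁻¹ * (1 - q ^ (2 * d * k + r : ℤ)) * PN d r k * (PD d k)⁻¹ * Vv d r k =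
      (1 - q ^ (2 * d * k + r : ℤ)) *
        ((1 - q)⁻¹ * (PN d r k * (PD d k)⁻¹) * Vv d r k) := by ring
  rw [hre]
  refine ZAt.mul_iAt hprime (zAt_one_sub_q hN' _ (by exact_mod_cast hdvdu)) ?_
  exact IAt.mul hprime (IAt.mul hprime
    (((uAt_one_sub_q_one hN2 hd hgcd hm2 hm2r).inv hprime).iAt hprime)
    (iAt_PN_PD hN2 hd hgcd hm2 hm2r k)) ((uAt_Vv hN2 hd hgcd hm2 hm2r k).iAt hprime)

end KeyD


section KeyE
variable {N d : ℕ} {r : ℤ} {m2 : ℕ}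
variable (hN2 : 2 ≤ N) (hd : 0 < d) (hgcd : Nat.gcd d N = 1)
  (hm2 : m2 < N) (hm2r : (N:ℤ) ∣ ((d:ℤ) * m2 + r))

lemma case2A (k t : ℕ) :
    lemmaTerm d r k + lemmaTerm d r (k + t) =
      (1 - q)⁻¹ * Vv d r k * (PN d r k * (PD d k)⁻¹) *
        ((1 - q ^ (2 * d * k + r : ℤ)) +
          (1 - q ^ (2 * d * (k + t) + r : ℤ)) *
            ((∏ i ∈ range t, XFf d r k i) *
              ((∏ i ∈ range t, YFf d k i)⁻¹ *
                ((b / (c * e)) ^ t * q ^ ((2 * d - 3 * r) * t : ℤ))))) := by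
  have hXF : (∏ i ∈ range t, XFf d r k i) =
      (∏ i ∈ range t, PNf d r (k+i)) * (∏ i ∈ range t, VNf d r (k+i)) := by
    unfold XFf; rw [Finset.prod_mul_distrib]
  have hYF : (∏ i ∈ range t, YFf d k i) =
      (∏ i ∈ range t, PDf d (k+i)) * (∏ i ∈ range t, VDf d (k+i)) := by
    unfold YFf; rw [Finset.prod_mul_distrib]
  have hPN : PN d r (k+t) = PN d r k * ∏ i ∈ range t, PNf d r (k+i) := by
    unfold PN; exact Finset.prod_range_add _ k t
  have hPD : PD d (k+t) = PD d k * ∏ i ∈ range t, PDf d (k+i) := by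
    unfold PD; exact Finset.prod_range_add _ k t
  have hVN : VN d r (k+t) = VN d r k * ∏ i ∈ range t, VNf d r (k+i) := by
    unfold VN; exact Finset.prod_range_add _ k t
  have hVD : VD d (k+t) = VD d k * ∏ i ∈ range t, VDf d (k+i) := by
    unfold VD; exact Finset.prod_range_add _ k t
  have hz : ((2 * (d:ℤ) - 3 * r) * ((k+t : ℕ) : ℤ)) =
      (2 * (d:ℤ) - 3 * r) * (k : ℤ) + (2 * (d:ℤ) - 3 * r) * (t : ℤ) := by
    push_cast; ring
  have hVv : Vv d r (k+t) = Vv d r k *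
      ((∏ i ∈ range t, VNf d r (k+i)) * (∏ i ∈ range t, VDf d (k+i))⁻¹ *
        ((b / (c * e)) ^ t * q ^ ((2 * d - 3 * r) * t : ℤ))) := by
    unfold Vv
    rw [hVN, hVD, pow_add, hz, zpow_add₀ q_ne]
    simp only [mul_inv]
    ring
  rw [master d r k, master d r (k+t), hPN, hPD, hVv, hXF, hYF]
  simp only [mul_inv]
  push_cast
  ring

include hN2 hd hgcd hm2 hm2r

lemma case2BR (k t : ℕ) (ht : 0 < t) (hcond : 2 * (k % N) + t = m2) :
    ZAt (Phi N)
      ((1 - q ^ (2 * d * k + r : ℤ)) +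
        (1 - q ^ (2 * d * (k + t) + r : ℤ)) *
          ((∏ i ∈ range t, XFf d r k i) *
            ((∏ i ∈ range t, YFf d k i)⁻¹ *
              ((b / (c * e)) ^ t * q ^ ((2 * d - 3 * r) * t : ℤ))))) := by
  have hN' : 0 < N := by omega
  have hprime := prime_Phi (N := N) hN'
  have hkeq : N * (k / N) + k % N = k := Nat.div_add_mod k N
  have hS : (N:ℤ) ∣ (r + (d:ℤ) * (2 * (k:ℤ) + (t:ℤ))) := by
    have hkz : (k:ℤ) = (N:ℤ) * ((k / N : ℕ) : ℤ) + ((k % N : ℕ) : ℤ) := by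
      exact_mod_cast hkeq.symm
    have hmz : ((m2:ℕ):ℤ) = 2 * ((k % N : ℕ) : ℤ) + (t:ℤ) := by exact_mod_cast hcond.symm
    have h5 : (r + (d:ℤ) * (2 * (k:ℤ) + (t:ℤ))) =
        ((d:ℤ) * m2 + r) + (N:ℤ) * (2 * (d:ℤ) * ((k / N : ℕ) : ℤ)) := by
      rw [hkz, hmz]; ring
    rw [h5]
    exact dvd_add hm2r (Dvd.intro _ rfl)
  have hwD : ∀ i, i < t → ¬ N ∣ (k + i + 1) := by
    intro i hit hdd
    have h6 : N ∣ (k % N + i + 1) := by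
      have h7 : k + i + 1 = N * (k / N) + (k % N + i + 1) := by omega
      rw [h7] at hdd
      exact (Nat.dvd_add_right ⟨k / N, rfl⟩).mp hdd
    have := Nat.le_of_dvd (by omega) h6
    omega
  -- unit/integrality facts
  have uYF : ∀ i ∈ range t, UAt (Phi N) (YFf d k i) := by
    intro i hi
    rw [Finset.mem_range] at hi
    unfold YFf
    exact (uAt_PDf hN2 hd hgcd hm2 hm2r (k+i) (hwD i hi)).mul hprime
      (uAt_VDf hN2 hd hgcd hm2 hm2r (k+i))
  have iXF : ∀ i ∈ range t, IAt (Phi N) (XFf d r k i) := by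
    intro i _
    unfold XFf
    exact (iAt_PNf hN2 hd hgcd hm2 hm2r (k+i)).mul hprime
      ((uAt_VNf hN2 hd hgcd hm2 hm2r (k+i)).iAt hprime)
  have uκ : ∀ i : ℕ, UAt (Phi N) (κf d r k i) := by
    intro i
    unfold κf
    refine UAt.mul hprime ?_ ((uAt_q_zpow hN' _).pow hprime 6)
    rw [div_eq_mul_inv, c_eq, e_eq, b_eq]
    exact ((uAt_var hN' 3).mul hprime (uAt_var hN' 4)).mul hprime
      ((uAt_var hN' 2).inv hprime)
  have iKY : ∀ i ∈ range t, IAt (Phi N) (κf d r k i * YFf d k (t-1-i)) := by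
    intro i hi
    rw [Finset.mem_range] at hi
    have hy : UAt (Phi N) (YFf d k (t-1-i)) := by
      unfold YFf
      exact (uAt_PDf hN2 hd hgcd hm2 hm2r (k+(t-1-i)) (hwD _ (by omega))).mul hprime
        (uAt_VDf hN2 hd hgcd hm2 hm2r (k+(t-1-i)))
    exact ((uκ i).iAt hprime).mul hprime (hy.iAt hprime)
  have cprod : CAt (Phi N) (∏ i ∈ range t, XFf d r k i)
      (∏ i ∈ range t, (κf d r k i * YFf d k (t-1-i))) :=
    CAt.prod hprime iXF iKY (fun i hi => per_i hN2 k t i (Finset.mem_range.mp hi) hS)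
  have hsplitK : (∏ i ∈ range t, (κf d r k i * YFf d k (t-1-i))) =
      (∏ i ∈ range t, κf d r k i) * (∏ i ∈ range t, YFf d k i) := by
    rw [Finset.prod_mul_distrib]
    congr 1
    exact Finset.prod_range_reflect (fun i => YFf d k i) t
  have hκ : (∏ i ∈ range t, κf d r k i) =
      (c * e / b) ^ t * q ^ (∑ i ∈ range t, 6 * (r + (d:ℤ) * ((k+i : ℕ) : ℤ))) := by
    unfold κf
    rw [Finset.prod_mul_distrib, Finset.prod_const, Finset.card_range]
    congr 1
    rw [Finset.prod_congr rfl (fun i _ => q_pow6 (r + (d:ℤ) * ((k+i : ℕ) : ℤ))),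
      prod_q_zpow]
  have h2E : (∑ i ∈ range t, (i:ℤ)) * 2 = (t:ℤ) * ((t:ℤ) - 1) := by
    have hnat := Finset.sum_range_id_mul_two t
    have hc := congrArg (fun n : ℕ => (n:ℤ)) hnat
    push_cast [Nat.cast_sub (show 1 ≤ t from ht)] at hc
    exact hc
  have hsum : (∑ i ∈ range t, 6 * (r + (d:ℤ) * ((k+i : ℕ) : ℤ))) +
      (2 * (d:ℤ) - 3 * r) * (t:ℤ) =
      (2 * (d:ℤ) * (k:ℤ) + r) + (r + (d:ℤ) * (2 * (k:ℤ) + (t:ℤ))) * (3 * (t:ℤ) - 1) := by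
    rw [Finset.sum_congr rfl
      (fun i _ => (by push_cast; ring :
        6 * (r + (d:ℤ) * ((k+i : ℕ) : ℤ)) = (6 * r + 6 * (d:ℤ) * (k:ℤ)) + 6 * (d:ℤ) * (i:ℤ)))]
    rw [Finset.sum_add_distrib, Finset.sum_const, Finset.card_range, ← Finset.mul_sum,
      nsmul_eq_mul]
    linear_combination 3 * (d:ℤ) * h2E
  have hmon : ((c * e / b) ^ t : K5) * (b / (c * e)) ^ t = 1 := by
    have hne : (b * (c * e) : K5) ≠ 0 := mul_ne_zero b_ne (mul_ne_zero c_ne e_ne)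
    rw [← mul_pow, show ((c * e / b) * (b / (c * e)) : K5) = 1 from by
      rw [div_mul_div_comm, div_eq_one_iff_eq hne]; ring]
    exact one_pow t
  have hYne : (∏ i ∈ range t, YFf d k i) ≠ 0 := by
    rw [Finset.prod_ne_zero_iff]
    exact fun i hi => (uYF i hi).ne_zero hprime
  -- congruence for G
  have cprod' : CAt (Phi N) (∏ i ∈ range t, XFf d r k i)
      ((∏ i ∈ range t, κf d r k i) * (∏ i ∈ range t, YFf d k i)) := hsplitK ▸ cprod
  have step1 : CAt (Phi N)
      ((∏ i ∈ range t, XFf d r k i) *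
        ((∏ i ∈ range t, YFf d k i)⁻¹ * ((b / (c * e)) ^ t * q ^ ((2 * d - 3 * r) * t : ℤ))))
      (((∏ i ∈ range t, κf d r k i) * (∏ i ∈ range t, YFf d k i)) *
        ((∏ i ∈ range t, YFf d k i)⁻¹ * ((b / (c * e)) ^ t * q ^ ((2 * d - 3 * r) * t : ℤ)))) := by
    refine CAt.mul hprime cprod' (cAt_refl hprime) ?_ ?_
    · exact ((UAt.prod hprime (fun i _ => uκ i)).mul hprime
        (UAt.prod hprime uYF)).iAt hprime
    · refine (((UAt.prod hprime uYF).inv hprime).mul hprime ?_).iAt hprime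
      exact (uAt_bce_pow hN2 hd hgcd hm2 hm2r t).mul hprime (uAt_q_zpow hN' _)
  have hGval : (((∏ i ∈ range t, κf d r k i) * (∏ i ∈ range t, YFf d k i)) *
      ((∏ i ∈ range t, YFf d k i)⁻¹ * ((b / (c * e)) ^ t * q ^ ((2 * d - 3 * r) * t : ℤ)))) =
      q ^ ((2 * (d:ℤ) * (k:ℤ) + r) + (r + (d:ℤ) * (2 * (k:ℤ) + (t:ℤ))) * (3 * (t:ℤ) - 1)
          - (2 * (d:ℤ) * (k:ℤ) + r)) *
        q ^ (2 * (d:ℤ) * (k:ℤ) + r) := by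
    have h8 : (((∏ i ∈ range t, κf d r k i) * (∏ i ∈ range t, YFf d k i)) *
        ((∏ i ∈ range t, YFf d k i)⁻¹ * ((b / (c * e)) ^ t * q ^ ((2 * d - 3 * r) * t : ℤ)))) =
        ((∏ i ∈ range t, κf d r k i) * ((b / (c * e)) ^ t * q ^ ((2 * d - 3 * r) * t : ℤ))) *
          ((∏ i ∈ range t, YFf d k i) * (∏ i ∈ range t, YFf d k i)⁻¹) := by ring
    rw [h8, mul_inv_cancel₀ hYne, mul_one, hκ]
    have h9 : ((c * e / b) ^ t : K5) * q ^ ((∑ i ∈ range t, 6 * (r + (d:ℤ) * ((k+i : ℕ) : ℤ)))) *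
        ((b / (c * e)) ^ t * q ^ ((2 * d - 3 * r) * t : ℤ)) =
        (((c * e / b) ^ t : K5) * (b / (c * e)) ^ t) *
          (q ^ ((∑ i ∈ range t, 6 * (r + (d:ℤ) * ((k+i : ℕ) : ℤ)))) *
            q ^ ((2 * d - 3 * r) * t : ℤ)) := by ring
    rw [h9, hmon, one_mul, ← zpow_add₀ q_ne, ← zpow_add₀ q_ne]
    congr 1
    rw [hsum]
    ring
  -- main congruence chain for the bracket
  have hq1 : (q:K5) ^ (-(2 * (d:ℤ) * (k:ℤ) + r)) * q ^ (2 * d * k + r : ℤ) = 1 := by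
    rw [← zpow_add₀ q_ne]
    have h10 : (-(2 * (d:ℤ) * (k:ℤ) + r)) + (2 * (d:ℤ) * (k:ℤ) + r) = 0 := by ring
    rw [show ((2 * d * k + r : ℤ)) = (2 * (d:ℤ) * (k:ℤ) + r) from by push_cast; ring, h10,
      zpow_zero]
  have hq2 : (q:K5) ^ (-(2 * (d:ℤ) * (k:ℤ) + r)) *
      q ^ (2 * (r + (d:ℤ) * (2 * (k:ℤ) + (t:ℤ)))) =
      q ^ (2 * d * (k + t) + r : ℤ) := by
    rw [← zpow_add₀ q_ne]
    congr 1
    push_cast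
    ring
  have heqc : (1 - (q:K5) ^ (2 * d * (k + t) + r : ℤ)) -
      (-(q ^ (-(2 * (d:ℤ) * (k:ℤ) + r))) * (1 - q ^ (2 * d * k + r : ℤ))) =
      q ^ (-(2 * (d:ℤ) * (k:ℤ) + r)) *
        (1 - q ^ (2 * (r + (d:ℤ) * (2 * (k:ℤ) + (t:ℤ))))) := by
    linear_combination -hq1 + hq2
  have cu : CAt (Phi N) (1 - q ^ (2 * d * (k + t) + r : ℤ))
      (-(q ^ (-(2 * (d:ℤ) * (k:ℤ) + r))) * (1 - q ^ (2 * d * k + r : ℤ))) := by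
    rw [CAt, heqc]
    exact IAt.mul_zAt hprime ((uAt_q_zpow hN' _).iAt hprime)
      (zAt_one_sub_q hN' _ (Dvd.dvd.mul_left hS 2))
  -- bracket ≡ (1 - q^{u1}) * (1 - q^{S(3t-1)})
  have iGexpr : IAt (Phi N) ((∏ i ∈ range t, XFf d r k i) *
      ((∏ i ∈ range t, YFf d k i)⁻¹ * ((b / (c * e)) ^ t * q ^ ((2 * d - 3 * r) * t : ℤ)))) := by
    refine (IAt.prod hprime iXF).mul hprime ?_
    refine (((UAt.prod hprime uYF).inv hprime).mul hprime ?_).iAt hprime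
    exact (uAt_bce_pow hN2 hd hgcd hm2 hm2r t).mul hprime (uAt_q_zpow hN' _)
  have cG : CAt (Phi N)
      ((∏ i ∈ range t, XFf d r k i) *
        ((∏ i ∈ range t, YFf d k i)⁻¹ * ((b / (c * e)) ^ t * q ^ ((2 * d - 3 * r) * t : ℤ))))
      (q ^ ((2 * (d:ℤ) * (k:ℤ) + r) + (r + (d:ℤ) * (2 * (k:ℤ) + (t:ℤ))) * (3 * (t:ℤ) - 1)
          - (2 * (d:ℤ) * (k:ℤ) + r)) *
        q ^ (2 * (d:ℤ) * (k:ℤ) + r)) := hGval ▸ step1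
  have cBR : CAt (Phi N)
      ((1 - q ^ (2 * d * k + r : ℤ)) +
        (1 - q ^ (2 * d * (k + t) + r : ℤ)) *
          ((∏ i ∈ range t, XFf d r k i) *
            ((∏ i ∈ range t, YFf d k i)⁻¹ *
              ((b / (c * e)) ^ t * q ^ ((2 * d - 3 * r) * t : ℤ)))))
      ((1 - q ^ (2 * d * k + r : ℤ)) +
        (-(q ^ (-(2 * (d:ℤ) * (k:ℤ) + r))) * (1 - q ^ (2 * d * k + r : ℤ))) *
          (q ^ ((2 * (d:ℤ) * (k:ℤ) + r) + (r + (d:ℤ) * (2 * (k:ℤ) + (t:ℤ))) * (3 * (t:ℤ) - 1)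
              - (2 * (d:ℤ) * (k:ℤ) + r)) *
            q ^ (2 * (d:ℤ) * (k:ℤ) + r))) := by
    refine CAt.add hprime (cAt_refl hprime) ?_
    refine CAt.mul hprime cu cG ?_ iGexpr
    exact IAt.mul hprime (((uAt_q_zpow hN' _).neg).iAt hprime) (iAt_one_sub_q hN2 _)
  have hzz : (q:K5) ^ (-(2 * (d:ℤ) * (k:ℤ) + r)) *
      (q ^ ((2 * (d:ℤ) * (k:ℤ) + r) + (r + (d:ℤ) * (2 * (k:ℤ) + (t:ℤ))) * (3 * (t:ℤ) - 1)
          - (2 * (d:ℤ) * (k:ℤ) + r)) *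
        q ^ (2 * (d:ℤ) * (k:ℤ) + r)) =
      q ^ ((r + (d:ℤ) * (2 * (k:ℤ) + (t:ℤ))) * (3 * (t:ℤ) - 1)) := by
    rw [← zpow_add₀ q_ne, ← zpow_add₀ q_ne]
    congr 1
    ring
  have hfin2 : ((1 - q ^ (2 * d * k + r : ℤ)) +
      (-(q ^ (-(2 * (d:ℤ) * (k:ℤ) + r))) * (1 - q ^ (2 * d * k + r : ℤ))) *
        (q ^ ((2 * (d:ℤ) * (k:ℤ) + r) + (r + (d:ℤ) * (2 * (k:ℤ) + (t:ℤ))) * (3 * (t:ℤ) - 1)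
            - (2 * (d:ℤ) * (k:ℤ) + r)) *
          q ^ (2 * (d:ℤ) * (k:ℤ) + r))) =
      (1 - q ^ (2 * d * k + r : ℤ)) *
        (1 - q ^ ((r + (d:ℤ) * (2 * (k:ℤ) + (t:ℤ))) * (3 * (t:ℤ) - 1))) := by
    linear_combination (-(1 - (q:K5) ^ (2 * d * k + r : ℤ))) * hzz
  have zfin : ZAt (Phi N) ((1 - q ^ (2 * d * k + r : ℤ)) *
      (1 - q ^ ((r + (d:ℤ) * (2 * (k:ℤ) + (t:ℤ))) * (3 * (t:ℤ) - 1)))) :=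
    IAt.mul_zAt hprime (iAt_one_sub_q hN2 _)
      (zAt_one_sub_q hN' _ (Dvd.dvd.mul_right hS _))
  exact CAt.zAt hprime (hfin2 ▸ cBR) zfin

lemma case2 (k t : ℕ) (ht : 0 < t) (hcond : 2 * (k % N) + t = m2) :
    ZAt (Phi N) (lemmaTerm d r k + lemmaTerm d r (k + t)) := by
  have hN' : 0 < N := by omega
  have hprime := prime_Phi (N := N) hN'
  rw [case2A]
  refine IAt.mul_zAt hprime ?_ (case2BR hN2 hd hgcd hm2 hm2r k t ht hcond)
  exact IAt.mul hprime (IAt.mul hprime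
    (((uAt_one_sub_q_one hN2 hd hgcd hm2 hm2r).inv hprime).iAt hprime)
    ((uAt_Vv hN2 hd hgcd hm2 hm2r k).iAt hprime))
    (iAt_PN_PD hN2 hd hgcd hm2 hm2r k)

end KeyE


/- ------------------- the per-prime vanishing of the sum ------------------- -/

theorem keyZ {N d : ℕ} (r : ℤ) (hN2 : 2 ≤ N) (hd : 0 < d) (hgcd : Nat.gcd d N = 1)
    (M : ℕ) (hMr : (N:ℤ) ∣ ((d:ℤ) * M + r)) :
    ZAt (Phi N) (∑ k ∈ range (M+1), lemmaTerm d r k) := by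
  have hN' : 0 < N := by omega
  have hprime := prime_Phi (N := N) hN'
  set m2 := M % N with hm2def
  have hm2 : m2 < N := Nat.mod_lt _ hN'
  have hm2r : (N:ℤ) ∣ ((d:ℤ) * m2 + r) := by
    have hMeq : N * (M / N) + M % N = M := Nat.div_add_mod M N
    have hMz : (M:ℤ) = (N:ℤ) * ((M / N : ℕ) : ℤ) + ((M % N : ℕ) : ℤ) := by
      exact_mod_cast hMeq.symm
    have hz : ((d:ℤ) * m2 + r) = ((d:ℤ) * M + r) - (N:ℤ) * ((d:ℤ) * ((M / N : ℕ) : ℤ)) := by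
      rw [hMz, hm2def]; push_cast; ring
    rw [hz]
    exact dvd_sub hMr (Dvd.intro _ rfl)
  set σ : ℕ → ℕ := fun k => if k % N ≤ m2 then (k / N) * N + (m2 - k % N) else k with hσ
  have hσmod : ∀ k, k % N ≤ m2 → (σ k) % N = m2 - k % N ∧ (σ k) / N = k / N := by
    intro k h
    simp only [hσ]
    rw [if_pos h]
    have e1 : (k / N) * N + (m2 - k % N) = N * (k / N) + (m2 - k % N) := by ring
    constructor
    · rw [e1, Nat.mul_add_mod]
      exact Nat.mod_eq_of_lt (by omega)
    · rw [e1, Nat.mul_add_div hN']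
      have : (m2 - k % N) / N = 0 := Nat.div_eq_of_lt (by omega)
      omega
  have hσin : ∀ k ∈ range (M+1), σ k ∈ range (M+1) := by
    intro k hk
    rw [Finset.mem_range] at hk ⊢
    by_cases h : k % N ≤ m2
    · simp only [hσ]
      rw [if_pos h]
      have h1 : k / N ≤ M / N := Nat.div_le_div_right (by omega)
      have h2 : (k/N) * N ≤ (M/N) * N := Nat.mul_le_mul_right _ h1
      have h3 : N * (M/N) + M % N = M := Nat.div_add_mod M N
      have h4 : N * (M/N) = (M/N) * N := by ring
      omega
    · simp only [hσ]
      rw [if_neg h]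
      exact hk
  have hσσ : ∀ k ∈ range (M+1), σ (σ k) = k := by
    intro k _
    by_cases h : k % N ≤ m2
    · obtain ⟨hmod, hdiv⟩ := hσmod k h
      have h2 : (σ k) % N ≤ m2 := by omega
      have e2 : σ (σ k) = (σ k / N) * N + (m2 - σ k % N) := by
        simp only [hσ]; rw [if_pos h2]
      rw [e2, hmod, hdiv]
      have h3 : N * (k/N) + k % N = k := Nat.div_add_mod k N
      have h4 : N * (k/N) = (k/N) * N := by ring
      omega
    · have e3 : σ k = k := by simp only [hσ]; rw [if_neg h]
      rw [e3, e3]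
  have hpair : ∀ k ∈ range (M+1), ZAt (Phi N) (lemmaTerm d r k + lemmaTerm d r (σ k)) := by
    intro k _
    have h3 : N * (k/N) + k % N = k := Nat.div_add_mod k N
    have h4 : N * (k/N) = (k/N) * N := by ring
    by_cases h : k % N ≤ m2
    · obtain ⟨hmod, hdiv⟩ := hσmod k h
      rcases lt_trichotomy (2 * (k % N)) m2 with hlt | heq2 | hgt
      · have hσk : σ k = k + (m2 - 2 * (k % N)) := by
          simp only [hσ]; rw [if_pos h]; omega
        rw [hσk]
        exact case2 hN2 hd hgcd hm2 hm2r k _ (by omega) (by omega)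
      · have hσk : σ k = k := by
          simp only [hσ]; rw [if_pos h]; omega
        rw [hσk]
        exact ZAt.add hprime (case3 hN2 hd hgcd hm2 hm2r k (by omega))
          (case3 hN2 hd hgcd hm2 hm2r k (by omega))
      · have hσk : σ k + (2 * (k % N) - m2) = k := by
          simp only [hσ]; rw [if_pos h]; omega
        have hc2 := case2 hN2 hd hgcd hm2 hm2r (σ k) (2 * (k % N) - m2) (by omega)
          (by rw [hmod]; omega)
        rw [hσk] at hc2
        rw [add_comm]
        exact hc2
    · have hσk : σ k = k := by simp only [hσ]; rw [if_neg h]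
      rw [hσk]
      exact ZAt.add hprime (case1 hN2 hd hgcd hm2 hm2r k (by omega))
        (case1 hN2 hd hgcd hm2 hm2r k (by omega))
  have hsum2 : (∑ k ∈ range (M+1), lemmaTerm d r k) + (∑ k ∈ range (M+1), lemmaTerm d r k)
      = ∑ k ∈ range (M+1), (lemmaTerm d r k + lemmaTerm d r (σ k)) := by
    rw [Finset.sum_add_distrib]
    congr 1
    exact Finset.sum_nbij' σ σ hσin hσin hσσ hσσ (fun a ha => by rw [hσσ a ha])
  have hZ2 := Finset.sum_induction _ (ZAt (Phi N))
    (fun x y hx hy => ZAt.add hprime hx hy) (zAt_zero hprime) hpair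
  rw [← hsum2] at hZ2
  exact ZAt.of_two_mul hprime hZ2

end S5

theorem stmt5 (d n : ℕ) (hd : 0 < d) (hn : 0 < n) (hgcd : Nat.gcd d n = 1) (r : ℤ)
    (m₁ : ℕ) (hm₁ : m₁ ≤ n - 1) (hm₁' : ((d : ℤ) * m₁) ≡ -r [ZMOD (n : ℤ)]) :
    fracCongr
      (∑ k ∈ Finset.range (m₁ + 1), lemmaTerm d r k)
      0
      (∑ i ∈ Finset.range n, (MvPolynomial.X 0 : MvPolynomial (Fin 5) ℚ) ^ i) := by
  classical
  by_cases hn1 : n = 1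
  · subst hn1
    have hP1 : (∑ i ∈ Finset.range 1, (MvPolynomial.X 0 : MvPolynomial (Fin 5) ℚ) ^ i) = 1 := by
      simp
    rw [hP1]
    obtain ⟨f, g, hg, hfg⟩ :=
      IsFractionRing.div_surjective (A := S5.RR) (∑ k ∈ Finset.range (m₁ + 1), lemmaTerm d r k)
    exact ⟨f, g, fun x _ hx1 => isUnit_of_dvd_one hx1, one_dvd _,
      by rw [sub_zero]; exact hfg.symm⟩
  · have hn2 : 2 ≤ n := by omega
    set SS : K5 := ∑ k ∈ Finset.range (m₁ + 1), lemmaTerm d r k with hSS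
    set N₀ : S5.RR := IsFractionRing.num S5.RR SS with hN₀
    set D₀ := IsFractionRing.den S5.RR SS with hD₀
    have hred : IsRelPrime N₀ (D₀ : S5.RR) := IsFractionRing.num_den_reduced S5.RR SS
    have hSdiv : S5.am N₀ / S5.am (D₀ : S5.RR) = SS := IsFractionRing.mk'_num_den' S5.RR SS
    have hD0 : (D₀ : S5.RR) ≠ 0 := nonZeroDivisors.coe_ne_zero D₀
    have hper : ∀ j ∈ n.divisors.erase 1, (S5.Phi j ∣ N₀ ∧ ¬ S5.Phi j ∣ (D₀ : S5.RR)) := by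
      intro j hj
      obtain ⟨hne1, hmem⟩ := Finset.mem_erase.mp hj
      obtain ⟨hjdvd, -⟩ := Nat.mem_divisors.mp hmem
      have hj0 : 0 < j := Nat.pos_of_mem_divisors hmem
      have hj2 : 2 ≤ j := by omega
      have hprimej := S5.prime_Phi (N := j) hj0
      have hgcdj : Nat.gcd d j = 1 := Nat.Coprime.coprime_dvd_right hjdvd hgcd
      have hMr : (j:ℤ) ∣ ((d:ℤ) * m₁ + r) := by
        have h2 := hm₁'.dvd
        have h1 : (n:ℤ) ∣ ((d:ℤ) * m₁ + r) := by
          have h3 : ((d:ℤ) * m₁ + r) = -((-r) - (d:ℤ) * m₁) := by ring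
          rw [h3]
          exact h2.neg_right
        exact dvd_trans (Int.natCast_dvd_natCast.mpr hjdvd) h1
      obtain ⟨f, g, hf, hg, hfg⟩ := S5.keyZ r hj2 hd hgcdj m₁ hMr
      have hgne : S5.am g ≠ 0 := S5.am_ne (fun h0 => hg (h0 ▸ dvd_zero _))
      have hDne : S5.am (D₀ : S5.RR) ≠ 0 := S5.am_ne hD0
      have hcross : N₀ * g = (D₀ : S5.RR) * f := by
        apply S5.am_inj
        rw [map_mul, map_mul]
        have h5 : S5.am N₀ / S5.am (D₀ : S5.RR) = S5.am f / S5.am g := by rw [hSdiv, hSS]; exact hfg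
        rw [div_eq_div_iff hDne hgne] at h5
        linear_combination h5
      have hdN : S5.Phi j ∣ N₀ := by
        have h6 : S5.Phi j ∣ N₀ * g := by
          rw [hcross]
          exact Dvd.dvd.mul_left hf _
        rcases hprimej.2.2 _ _ h6 with h7 | h7
        · exact h7
        · exact absurd h7 hg
      refine ⟨hdN, fun hdD => ?_⟩
      exact hprimej.not_unit (hred hdN hdD)
    have hPfact : (∑ i ∈ Finset.range n, (MvPolynomial.X 0 : MvPolynomial (Fin 5) ℚ) ^ i) =
        ∏ j ∈ n.divisors.erase 1, S5.Phi j := by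
      have h1 := Polynomial.prod_cyclotomic_eq_geom_sum hn ℚ
      have h2 := congrArg S5.PtoR h1
      rw [map_prod, map_sum] at h2
      have h3 : ∀ i : ℕ, S5.PtoR (Polynomial.X ^ i) = (MvPolynomial.X 0 : S5.RR) ^ i := by
        intro i
        rw [map_pow]
        simp [S5.PtoR]
      rw [Finset.sum_congr rfl (fun i _ => h3 i)] at h2
      exact h2.symm
    have hpairwise : (↑(n.divisors.erase 1) : Set ℕ).Pairwise (Function.onFun IsCoprime S5.Phi) := by
      intro x _ y _ hxy
      exact (Polynomial.cyclotomic.isCoprime_rat hxy).map S5.PtoR.toRingHom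
    have hPdvd : (∑ i ∈ Finset.range n, (MvPolynomial.X 0 : MvPolynomial (Fin 5) ℚ) ^ i) ∣ N₀ := by
      rw [hPfact]
      exact Finset.prod_dvd_of_coprime hpairwise (fun j hj => (hper j hj).1)
    have hrelP : IsRelPrime (D₀ : S5.RR)
        (∑ i ∈ Finset.range n, (MvPolynomial.X 0 : MvPolynomial (Fin 5) ℚ) ^ i) := by
      intro x hxD hxP
      by_contra hxu
      have hx0 : x ≠ 0 := by
        intro h0
        rw [h0] at hxD
        exact hD0 (zero_dvd_iff.mp hxD)
      obtain ⟨p, hpirr, hpdvd⟩ := WfDvdMonoid.exists_irreducible_factor hxu hx0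
      have hpprime : Prime p := UniqueFactorizationMonoid.irreducible_iff_prime.mp hpirr
      have hpP : p ∣ ∏ j ∈ n.divisors.erase 1, S5.Phi j := by
        rw [← hPfact]
        exact hpdvd.trans hxP
      obtain ⟨j, hj, hpj⟩ := (Prime.dvd_finset_prod_iff hpprime _).mp hpP
      have hj0 : 0 < j := Nat.pos_of_mem_divisors (Finset.mem_of_mem_erase hj)
      have hassoc := Prime.associated_of_dvd hpprime (S5.prime_Phi (N := j) hj0) hpj
      have : S5.Phi j ∣ (D₀ : S5.RR) := (hassoc.symm.dvd).trans (hpdvd.trans hxD)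
      exact (hper j hj).2 this
    exact ⟨N₀, (D₀ : S5.RR), hrelP, hPdvd, by rw [sub_zero]; exact hSdiv.symm⟩
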